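/- arXiv:2209.05595 — 14 statements merged into one kernel-verified Lean document; each statement's English description precedes it below -/
import Mathlib

section
/- Let V be an n-dimensional vector space over a field K of characteristic zero and let φ be a linear endomorphism of V. If there exists a linear functional ᾱ on V such that (ᾱ, ᾱ∘φ, ..., ᾱ∘φ^{n-1}) is a basis of the dual space V*, then there exists a vector x̄ in V such that (x̄, φ(x̄), ..., φ^{n-1}(x̄)) is a basis of V. -/
/-!
Let `x` be the vector dual to `α ∘ φ ^ (n - 1)` with respect to the basis `(α ∘ φ ^ i)ᵢ` of `V*`,
so that `α (φ ^ k x) = δ_{k, n-1}` for `k < n`. Pairing `φ ^ j x` against `α ∘ φ ^ (n - 1 - i)`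
gives `α (φ ^ (n - 1 - i + j) x)`, a triangular matrix with ones on the diagonal; hence the
`n` vectors `φ ^ j x` are linearly independent and form a basis of `V`.
-/

theorem linearIndependent_of_dual_triangular {R M ι : Type*} [CommRing R] [NoZeroDivisors R]
    [AddCommGroup M] [Module R M] [Fintype ι] [LinearOrder ι] {v : ι → M}
    (f : ι → Module.Dual R M) (hdiag : ∀ i, f i (v i) ≠ 0) (hlt : ∀ i j, j < i → f i (v j) = 0) :
    LinearIndependent R v := by
  rw [Fintype.linearIndependent_iff]
  intro g hg i
  induction i using WellFoundedGT.induction with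
  | _ i ih =>
    have hfi := congrArg (f i) hg
    rw [map_sum, map_zero, Finset.sum_eq_single i] at hfi
    · simpa [hdiag i] using hfi
    · intro j _ hji
      rcases hji.lt_or_gt with hj | hj
      · simp [hlt i j hj]
      · simp [ih j hj]
    · simp

theorem Module.Basis.exists_apply_eq_ite {K V ι : Type*} [Field K] [AddCommGroup V] [Module K V]
    [FiniteDimensional K V] [DecidableEq ι] (b : Module.Basis ι K (Module.Dual K V)) (j : ι) :
    ∃ x : V, ∀ i, b i x = if i = j then 1 else 0 :=
  ⟨(Module.evalEquiv K V).symm (b.coord j), fun i => by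
    rw [Module.apply_evalEquiv_symm_apply, b.coord_apply, b.repr_self, Finsupp.single_apply,
      eq_comm]⟩

theorem linearIndependent_pow_apply_of_apply_pow_eq {R M : Type*} [CommRing R] [NoZeroDivisors R]
    [Nontrivial R] [AddCommGroup M] [Module R M] {n : ℕ} (φ : Module.End R M)
    (α : Module.Dual R M) {x : M}
    (hx : ∀ k < n, α ((φ ^ k) x) = if k + 1 = n then 1 else 0) :
    LinearIndependent R (fun i : Fin n => (φ ^ (i : ℕ)) x) := by
  have hpair : ∀ i j : Fin n, j ≤ i →
      (α ∘ₗ φ ^ (n - 1 - i : ℕ)) ((φ ^ (j : ℕ)) x) = if i = j then 1 else 0 := by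
    intro i j hji
    rw [LinearMap.comp_apply, ← Module.End.mul_apply, ← pow_add, hx _ (by omega)]
    simp only [Fin.ext_iff, show n - 1 - i + j + 1 = n ↔ (i : ℕ) = j by omega]
  refine linearIndependent_of_dual_triangular (fun i => α ∘ₗ φ ^ (n - 1 - i : ℕ))
    (fun i => by simp [hpair i i le_rfl]) (fun i j hj => ?_)
  rw [hpair i j hj.le, if_neg hj.ne']

theorem stmt0_general {K V : Type*} [Field K] [AddCommGroup V] [Module K V]
    [FiniteDimensional K V] {n : ℕ} (hn : Module.finrank K V = n)
    (φ : Module.End K V) (α : Module.Dual K V)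
    (b : Module.Basis (Fin n) K (Module.Dual K V))
    (hb : ∀ i : Fin n, b i = α ∘ₗ (φ ^ (i : ℕ) : Module.End K V)) :
    ∃ (x : V) (c : Module.Basis (Fin n) K V), ∀ i : Fin n, c i = (φ ^ (i : ℕ)) x := by
  obtain ⟨x, hx⟩ : ∃ x : V, LinearIndependent K (fun i : Fin n => (φ ^ (i : ℕ)) x) := by
    rcases n with _ | m
    · exact ⟨0, linearIndependent_empty_type⟩
    obtain ⟨x, hx⟩ := b.exists_apply_eq_ite (Fin.last m)
    refine ⟨x, linearIndependent_pow_apply_of_apply_pow_eq φ α fun k hk => ?_⟩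
    simpa [hb, Fin.ext_iff] using hx ⟨k, hk⟩
  exact ⟨x, basisOfLinearIndependentOfCardEqFinrank' _ hx (by simp [hn]), fun i => by simp⟩

/-- If some linear functional `α` has `(α, α∘φ, …, α∘φ^{n-1})` a basis of the dual `V*`,
then some vector `x` has `(x, φ x, …, φ^{n-1} x)` a basis of `V`. -/
theorem stmt0 {K V : Type*} [Field K] [CharZero K] [AddCommGroup V] [Module K V]
    [FiniteDimensional K V] {n : ℕ} (hn : Module.finrank K V = n)
    (φ : Module.End K V) (α : Module.Dual K V)
    (b : Module.Basis (Fin n) K (Module.Dual K V))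
    (hb : ∀ i : Fin n, b i = α ∘ₗ (φ ^ (i : ℕ) : Module.End K V)) :
    ∃ (x : V) (c : Module.Basis (Fin n) K V), ∀ i : Fin n, c i = (φ ^ (i : ℕ)) x :=
  stmt0_general hn φ α b hb
end

section
/- Let V be an n-dimensional vector space over a field K of characteristic zero and φ an endomorphism of V. Then the characteristic polynomial of φ equals its minimal polynomial if and only if the centralizer of φ in End(V) equals the algebra K[φ] of polynomials in φ. -/
/-!
Let `M` be `V` viewed as a `K[X]`-module through `φ`; both conditions say that `M` is cyclic.
The minimal polynomial `μ` generates the annihilator of `M`, and `M` has an element whose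
annihilator is exactly `(μ)`; it spans a subspace of dimension `deg μ`, so `deg μ = dim V` iff
`M` is cyclic. The centralizer of `φ` is `End_{K[X]}(M)`, and `K[φ]` is the image of `K[X]`
in it. Every endomorphism of a cyclic module is a multiplication. Conversely, write
`M ≅ ⨁ K[X]/(qᵢ)`: if the projection onto the `i`-th summand is multiplication by `s`, then
`s ≡ 1 mod qᵢ` and `s ≡ 0 mod qⱼ`, so the `qᵢ` are pairwise coprime and `M` is cyclic by the
Chinese remainder theorem.
-/

open Function Polynomial Module DirectSum

section CommRing

variable {R M N : Type*} [CommRing R] [AddCommGroup M] [Module R M] [AddCommGroup N] [Module R N]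

theorem Submodule.span_singleton_map_eq_top {x : M} (hx : R ∙ x = ⊤) {f : M →ₗ[R] N}
    (hf : Surjective f) : R ∙ f x = ⊤ := by
  rw [← Set.image_singleton, ← Submodule.map_span, hx, Submodule.map_top,
    LinearMap.range_eq_top.mpr hf]

theorem Module.algebraMap_end_surjective_of_span_singleton_eq_top {x : M} (hx : R ∙ x = ⊤) :
    Surjective (algebraMap R (Module.End R M)) := by
  intro f
  obtain ⟨s, hs⟩ := Submodule.mem_span_singleton.mp (hx ▸ Submodule.mem_top : f x ∈ R ∙ x)
  exact ⟨s, LinearMap.ext_on hx (by rintro _ rfl; exact hs)⟩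

theorem LinearEquiv.algebraMap_end_surjective (e : M ≃ₗ[R] N)
    (h : Surjective (algebraMap R (Module.End R M))) :
    Surjective (algebraMap R (Module.End R N)) := by
  rw [← (e.conjAlgEquiv R).toAlgHom.comp_algebraMap]
  exact (e.conjAlgEquiv R).surjective.comp h

variable {ι : Type*} {I : ι → Ideal R}

theorem DirectSum.pairwise_isCoprime_of_algebraMap_end_surjective [DecidableEq ι]
    (h : Surjective (algebraMap R (Module.End R (⨁ i, R ⧸ I i)))) :
    Pairwise (IsCoprime on I) := by
  intro i j hij
  obtain ⟨s, hs⟩ := h (lof R ι _ i ∘ₗ component R ι _ i)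
  have hproj (k : ι) : s • lof R ι (fun i ↦ R ⧸ I i) k 1 =
      lof R ι _ i (component R ι _ i (lof R ι _ k 1)) := by
    rw [← Module.algebraMap_end_apply R R, hs]; rfl
  have hi : s - 1 ∈ I i := by
    have := congrArg (component R ι _ i) (hproj i)
    rwa [component.lof_self, ← map_smul, component.lof_self, component.lof_self,
      Algebra.smul_def, mul_one, Ideal.Quotient.algebraMap_eq,
      ← map_one (Ideal.Quotient.mk (I i)), Ideal.Quotient.eq] at this
  have hj : s ∈ I j := by
    have := congrArg (component R ι _ j) (hproj j)
    rwa [lof_eq_of R, component.of, dif_neg hij, ← lof_eq_of R, ← map_smul, component.lof_self,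
      Algebra.smul_def, mul_one, Ideal.Quotient.algebraMap_eq,
      Ideal.Quotient.eq_zero_iff_mem] at this
  refine Ideal.isCoprime_iff_exists.mpr ⟨1 - s, ?_, s, hj, sub_add_cancel 1 s⟩
  simpa using neg_mem hi

theorem DirectSum.exists_span_singleton_eq_top_of_pairwise_isCoprime [Fintype ι]
    (hI : Pairwise (IsCoprime on I)) : ∃ x : ⨁ i, R ⧸ I i, R ∙ x = ⊤ :=
  ⟨_, Submodule.span_singleton_map_eq_top (Ideal.span_singleton_one (α := R))
    (f := (linearEquivFunOnFintype R ι _).symm.toLinearMap ∘ₗ LinearMap.pi fun i ↦ (I i).mkQ)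
    ((linearEquivFunOnFintype R ι _).symm.surjective.comp (Ideal.pi_mkQ_surjective hI))⟩

end CommRing

theorem Module.exists_span_singleton_eq_top_of_algebraMap_end_surjective {R M : Type*} [CommRing R]
    [IsDomain R] [IsPrincipalIdealRing R] [AddCommGroup M] [Module R M] [Module.Finite R M]
    (hM : Module.IsTorsion R M) (h : Surjective (algebraMap R (Module.End R M))) :
    ∃ x : M, R ∙ x = ⊤ := by
  classical
  obtain ⟨ι, _, p, -, e, ⟨D⟩⟩ := Module.equiv_directSum_of_isTorsion hM
  obtain ⟨y, hy⟩ := DirectSum.exists_span_singleton_eq_top_of_pairwise_isCoprime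
    (DirectSum.pairwise_isCoprime_of_algebraMap_end_surjective (D.algebraMap_end_surjective h))
  exact ⟨D.symm y, Submodule.span_singleton_map_eq_top hy D.symm.surjective⟩

theorem Module.exists_span_singleton_eq_top_iff_algebraMap_end_surjective {R M : Type*}
    [CommRing R] [IsDomain R] [IsPrincipalIdealRing R] [AddCommGroup M] [Module R M]
    [Module.Finite R M] (hM : Module.IsTorsion R M) :
    (∃ x : M, R ∙ x = ⊤) ↔ Surjective (algebraMap R (Module.End R M)) :=
  ⟨fun ⟨_, hx⟩ ↦ algebraMap_end_surjective_of_span_singleton_eq_top hx,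
    exists_span_singleton_eq_top_of_algebraMap_end_surjective hM⟩

namespace Module.AEval'

variable {R V : Type*} [CommRing R] [AddCommGroup V] [Module R V] {φ ψ : Module.End R V}

theorem mem_centralizer_iff :
    ψ ∈ Subalgebra.centralizer R {φ} ↔
      ∃ f : Module.End R[X] (AEval' φ), ∀ v, f (of φ v) = of φ (ψ v) := by
  simp only [Subalgebra.mem_centralizer_iff, Set.mem_singleton_iff, forall_eq]
  constructor
  · intro h
    refine ⟨LinearMap.ofAEval φ ((of φ).toLinearMap ∘ₗ ψ) fun v ↦ ?_, fun v ↦ rfl⟩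
    simp only [LinearMap.comp_apply, LinearEquiv.coe_coe, AEval'.X_smul_of]
    exact congrArg (of φ) (LinearMap.congr_fun h v).symm
  · rintro ⟨f, hf⟩
    ext v
    apply (of φ).injective
    rw [Module.End.mul_apply, Module.End.mul_apply, ← AEval'.X_smul_of, ← hf, ← hf,
      ← AEval'.X_smul_of, map_smul]

theorem algebraMap_eq_iff {f : Module.End R[X] (AEval' φ)}
    (hf : ∀ v, f (of φ v) = of φ (ψ v)) (s : R[X]) :
    algebraMap R[X] _ s = f ↔ aeval φ s = ψ := by
  rw [LinearMap.ext_iff, LinearMap.ext_iff, (of φ).surjective.forall]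
  refine forall_congr' fun v ↦ ?_
  rw [Module.algebraMap_end_apply, hf, ← AEval.of_aeval_smul, (of φ).injective.eq_iff]
  rfl

end Module.AEval'

theorem Subalgebra.centralizer_eq_adjoin_iff_algebraMap_end_surjective {R V : Type*}
    [CommRing R] [AddCommGroup V] [Module R V] (φ : Module.End R V) :
    Subalgebra.centralizer R {φ} = Algebra.adjoin R {φ} ↔
      Surjective (algebraMap R[X] (Module.End R[X] (AEval' φ))) := by
  have hle : Algebra.adjoin R {φ} ≤ Subalgebra.centralizer R {φ} :=
    Algebra.adjoin_le <| Set.singleton_subset_iff.mpr <| by simp [Set.mem_centralizer_iff]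
  rw [le_antisymm_iff, and_iff_left hle, Algebra.adjoin_singleton_eq_range_aeval]
  constructor
  · intro h f
    set ψ := (AEval'.of φ).symm.conj (f.restrictScalars R)
    have hf (v : V) : f (AEval'.of φ v) = AEval'.of φ (ψ v) := by
      simp [ψ, LinearEquiv.conj_apply]
    obtain ⟨s, hs⟩ := h (AEval'.mem_centralizer_iff.mpr ⟨f, hf⟩)
    exact ⟨s, (AEval'.algebraMap_eq_iff hf s).mpr hs⟩
  · intro h ψ hψ
    obtain ⟨f, hf⟩ := AEval'.mem_centralizer_iff.mp hψ
    obtain ⟨s, hs⟩ := h f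
    exact ⟨s, (AEval'.algebraMap_eq_iff hf s).mp hs⟩

section Field

variable {K V : Type*} [Field K] [AddCommGroup V] [Module K V]

theorem Module.AEval'.finrank_span_singleton [FiniteDimensional K V] {φ : Module.End K V}
    {x : AEval' φ}
    (hx : Ideal.torsionOf K[X] (AEval' φ) x = Module.annihilator K[X] (AEval' φ)) :
    finrank K (K[X] ∙ x) = (minpoly K φ).natDegree := by
  rw [← ((Ideal.quotTorsionOfEquivSpanSingleton K[X] _ x).restrictScalars K).finrank_eq, hx,
    ← Polynomial.span_minpoly_eq_annihilator]
  exact (AdjoinRoot.powerBasis (minpoly.ne_zero (Algebra.IsIntegral.isIntegral φ))).finrank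

theorem LinearMap.charpoly_eq_minpoly_iff_natDegree_minpoly [FiniteDimensional K V]
    (φ : Module.End K V) :
    φ.charpoly = minpoly K φ ↔ (minpoly K φ).natDegree = finrank K V := by
  refine ⟨fun h ↦ h ▸ φ.charpoly_natDegree, fun h ↦ ?_⟩
  exact (eq_of_monic_of_dvd_of_natDegree_le (minpoly.monic (Algebra.IsIntegral.isIntegral φ))
    φ.charpoly_monic φ.minpoly_dvd_charpoly (by rw [h, φ.charpoly_natDegree]))

theorem LinearMap.charpoly_eq_minpoly_iff_exists_span_singleton_eq_top [FiniteDimensional K V]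
    (φ : Module.End K V) : φ.charpoly = minpoly K φ ↔ ∃ x : AEval' φ, K[X] ∙ x = ⊤ := by
  rw [φ.charpoly_eq_minpoly_iff_natDegree_minpoly]
  constructor
  · intro h
    obtain ⟨x, hx⟩ :=
      Module.exists_ker_toSpanSingleton_eq_annihilator (R := K[X]) (M := AEval' φ)
    refine ⟨x, (Submodule.restrictScalars_eq_top_iff K _ _).mp
      (Submodule.eq_top_of_finrank_eq ?_)⟩
    exact (AEval'.finrank_span_singleton hx).trans (h.trans (AEval'.of φ).finrank_eq)
  · rintro ⟨x, hx⟩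
    have htors : Ideal.torsionOf K[X] (AEval' φ) x = Module.annihilator K[X] (AEval' φ) := by
      rw [← Ideal.annihilator_span_singleton_eq_torsionOf, hx, Submodule.annihilator_top]
    rw [← AEval'.finrank_span_singleton htors, hx, (AEval'.of φ).finrank_eq]
    exact (Submodule.topEquiv.restrictScalars K).finrank_eq

end Field

theorem stmt1_general {K V : Type*} [Field K] [AddCommGroup V] [Module K V]
    [FiniteDimensional K V]
    (φ : Module.End K V) :
    LinearMap.charpoly φ = minpoly K φ ↔
      Subalgebra.centralizer K ({φ} : Set (Module.End K V)) = Algebra.adjoin K {φ} :=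
  φ.charpoly_eq_minpoly_iff_exists_span_singleton_eq_top.trans <|
    (Module.exists_span_singleton_eq_top_iff_algebraMap_end_surjective
      (Module.AEval.isTorsion_of_finiteDimensional K V φ)).trans
    (Subalgebra.centralizer_eq_adjoin_iff_algebraMap_end_surjective φ).symm

/-- The characteristic polynomial of `φ` equals its minimal polynomial iff the
centralizer of `φ` in `End(V)` equals the algebra `K[φ]` of polynomials in `φ`. -/
theorem stmt1 {K V : Type*} [Field K] [CharZero K] [AddCommGroup V] [Module K V]
    [FiniteDimensional K V] {n : ℕ} (hn : Module.finrank K V = n)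
    (φ : Module.End K V) :
    LinearMap.charpoly φ = minpoly K φ ↔
      Subalgebra.centralizer K ({φ} : Set (Module.End K V)) = Algebra.adjoin K {φ} :=
  stmt1_general φ
end

section
/- Let V be a real vector space of dimension n and B an n-dimensional abelian Lie subalgebra of gl(V). If there exists α ∈ V* whose orbit under the contragredient action of B is all of V* (i.e., {−α∘a : a ∈ B} = V*), then B is a maximal abelian subalgebra of gl(V): every endomorphism of V commuting with all elements of B lies in B. -/
/-- If `B` is an `n`-dimensional abelian Lie subalgebra of `gl(V)` (`n = dim V`) and some
functional `α ∈ V*` has full orbit `{-α∘a : a ∈ B} = V*` under the contragredient action,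
then `B` is a maximal abelian subalgebra of `gl(V)`. -/
theorem stmt4 {V : Type*} [AddCommGroup V] [Module ℝ V] [FiniteDimensional ℝ V]
    {n : ℕ} (hV : Module.finrank ℝ V = n)
    (B : Submodule ℝ (Module.End ℝ V)) (hB : Module.finrank ℝ B = n)
    (habel : ∀ a ∈ B, ∀ b ∈ B, a * b = b * a)
    (α : Module.Dual ℝ V)
    (horbit : ∀ f : Module.Dual ℝ V, ∃ a ∈ B, f = -(α ∘ₗ a)) :
    ∀ ψ : Module.End ℝ V, (∀ a ∈ B, ψ * a = a * ψ) → ψ ∈ B := by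
  intro ψ hψ
  obtain ⟨a, haB, ha⟩ := horbit (-(α ∘ₗ ψ))
  have hαa : α ∘ₗ ψ = α ∘ₗ a := neg_injective ha
  have hψa : ψ = a := by
    ext v
    have hz : ψ v - a v = 0 := by
      rw [← Module.forall_dual_apply_eq_zero_iff ℝ]
      intro f
      obtain ⟨b, hbB, hb⟩ := horbit f
      have hcomm1 : ψ * b = b * ψ := hψ b hbB
      have hcomm2 : a * b = b * a := habel a haB b hbB
      have h1 : b (ψ v) = ψ (b v) := by
        have := congrArg (fun e => e v) hcomm1
        simpa [Module.End.mul_apply] using this.symm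
      have h2 : b (a v) = a (b v) := by
        have := congrArg (fun e => e v) hcomm2
        simpa [Module.End.mul_apply] using this.symm
      have h3 : α (ψ (b v)) = α (a (b v)) := congrArg (fun g => g (b v)) hαa
      subst hb
      simp [map_sub, h1, h2, h3]
    have := sub_eq_zero.mp hz
    simpa using this
  rw [hψa]; exact haB
end

section
/- Let V be a real vector space of dimension n, B an n-dimensional abelian Lie subalgebra of gl(V), and α ∈ V* such that the orbital map Q : B → V*, Q(a) = −α∘a, is bijective. Then the semidirect sum Lie algebra G = B ⋉ V (with bracket [a,b]=0 for a,b ∈ B, [x,y]=0 for x,y ∈ V, and [a,x] = a(x)) is a Frobenius Lie algebra: there exists a linear functional β on G such that the bilinear form ∂β(u,v) = −β([u,v]) is nondegenerate. -/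
/-- If `B` is an `n`-dimensional abelian Lie subalgebra of `gl(V)` (`n = dim V`) and the orbital
map `Q : B → V*`, `Q a = -α∘a`, is bijective for some `α ∈ V*`, then the semidirect sum
`B ⋉ V` (with bracket `[(a,x),(b,y)] = (0, a y - b x)`) is a Frobenius Lie algebra:
some linear functional `β` on it makes `∂β(u,v) = -β [u,v]` nondegenerate. -/
theorem stmt5 {V : Type*} [AddCommGroup V] [Module ℝ V] [FiniteDimensional ℝ V]
    {n : ℕ} (hV : Module.finrank ℝ V = n)
    (B : Submodule ℝ (Module.End ℝ V)) (hB : Module.finrank ℝ B = n)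
    (habel : ∀ a ∈ B, ∀ b ∈ B, a * b = b * a)
    (α : Module.Dual ℝ V)
    (hQ : Function.Bijective fun a : B => -(α ∘ₗ (a : Module.End ℝ V))) :
    ∃ β : (B × V) →ₗ[ℝ] ℝ,
      ∀ u : B × V,
        (∀ v : B × V,
          -β ((0 : B), (u.1 : Module.End ℝ V) v.2 - (v.1 : Module.End ℝ V) u.2) = 0) →
        u = 0 := by
  refine ⟨α ∘ₗ LinearMap.snd ℝ B V, fun u hu => ?_⟩
  have h1 : u.1 = 0 := by
    apply hQ.injective
    simp only [map_zero]
    ext x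
    have := hu (0, x)
    simpa using this
  have h2 : u.2 = 0 := by
    rw [← Module.forall_dual_apply_eq_zero_iff ℝ u.2]
    intro f
    obtain ⟨a, ha⟩ := hQ.surjective (-f)
    have := hu (a, 0)
    simp only [h1, Submodule.coe_zero, LinearMap.zero_apply, zero_sub] at this
    have hf := LinearMap.congr_fun ha u.2
    simp only [LinearMap.neg_apply, LinearMap.comp_apply] at hf
    simp only [LinearMap.comp_apply, LinearMap.snd_apply, map_neg, neg_neg] at this
    linarith [hf, this]
  exact Prod.ext h1 h2
end

section
/- Let V be a real vector space, and B₁, B₂ two maximal abelian subalgebras of gl(V) with dim V = dim B₁ = dim B₂. Then the semidirect sum Lie algebras B₁ ⋉ V and B₂ ⋉ V are isomorphic as Lie algebras if and only if there exists an invertible linear map φ ∈ GL(V) such that B₂ = φ B₁ φ^{-1}. -/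
/-!
If `1 ∈ B`, the bracket of `(1, 0)` with `(0, x)` is `(0, x)`, so `V` is the derived algebra of
`B ⋉ V`. A Lie isomorphism `e : B₁ ⋉ V ≃ B₂ ⋉ V` therefore restricts to a linear automorphism `g`
of `V`, and the bracket `[(a, 0), (0, x)] = (0, a x)` turns into `g ∘ a = (e (a, 0)).1 ∘ g`, i.e.
`g` conjugates `B₁` into `B₂`; the same applied to `e.symm` gives the reverse inclusion.
Conversely, conjugation by `g` on `B₁` together with `g` on `V` is a Lie isomorphism.
The identity lies in every maximal abelian subalgebra, since it commutes with everything.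
-/

namespace SemidirectSum

variable {R V : Type*} [CommRing R] [AddCommGroup V] [Module R V]

def bracket (B : Submodule R (Module.End R V)) (u v : B × V) : B × V :=
  (0, (u.1 : Module.End R V) v.2 - (v.1 : Module.End R V) u.2)

section

variable {B₁ B₂ : Submodule R (Module.End R V)} {e : (B₁ × V) ≃ₗ[R] (B₂ × V)}

theorem symm_map_bracket (he : ∀ u v, e (bracket B₁ u v) = bracket B₂ (e u) (e v))
    (u v : B₂ × V) : e.symm (bracket B₂ u v) = bracket B₁ (e.symm u) (e.symm v) :=
  e.injective <| by simp only [he, LinearEquiv.apply_symm_apply]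

theorem fst_map_inr_eq_zero (h₁ : 1 ∈ B₁)
    (he : ∀ u v, e (bracket B₁ u v) = bracket B₂ (e u) (e v)) (x : V) : (e (0, x)).1 = 0 := by
  have hx : bracket B₁ (⟨1, h₁⟩, 0) (0, x) = (0, x) := by simp [bracket]
  rw [← hx, he]
  rfl

theorem exists_linearEquiv_map_inr (h₁ : 1 ∈ B₁) (h₂ : 1 ∈ B₂)
    (he : ∀ u v, e (bracket B₁ u v) = bracket B₂ (e u) (e v)) :
    ∃ g : V ≃ₗ[R] V, ∀ x, e (0, x) = (0, g x) := by
  have hinr : ∀ x, e (0, x) = (0, (e (0, x)).2) := fun x =>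
    Prod.ext (fst_map_inr_eq_zero h₁ he x) rfl
  have hinr_symm : ∀ x, e.symm (0, x) = (0, (e.symm (0, x)).2) := fun x =>
    Prod.ext (fst_map_inr_eq_zero h₂ (symm_map_bracket he) x) rfl
  let f := LinearMap.snd R B₂ V ∘ₗ e.toLinearMap ∘ₗ LinearMap.inr R B₁ V
  let f' := LinearMap.snd R B₁ V ∘ₗ e.symm.toLinearMap ∘ₗ LinearMap.inr R B₂ V
  refine ⟨LinearEquiv.ofLinearMap f f' ?_ ?_, hinr⟩
  · ext x
    change (e (0, (e.symm (0, x)).2)).2 = x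
    rw [← hinr_symm]
    simp
  · ext x
    change (e.symm (0, (e (0, x)).2)).2 = x
    rw [← hinr]
    simp

theorem conj_eq_fst_map_inl {g : V ≃ₗ[R] V} (hg : ∀ x, e (0, x) = (0, g x))
    (he : ∀ u v, e (bracket B₁ u v) = bracket B₂ (e u) (e v)) (a : B₁) :
    g.conj (a : Module.End R V) = (e (a, 0)).1 := by
  ext y
  obtain ⟨x, rfl⟩ := g.surjective y
  have hax : bracket B₁ (a, 0) (0, x) = (0, (a : Module.End R V) x) := by simp [bracket]
  have := congrArg Prod.snd (he (a, 0) (0, x))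
  rw [hax, hg, hg] at this
  simpa [bracket] using this

theorem map_conj_le {g : V ≃ₗ[R] V} (hg : ∀ x, e (0, x) = (0, g x))
    (he : ∀ u v, e (bracket B₁ u v) = bracket B₂ (e u) (e v)) :
    B₁.map (g.conj : Module.End R V →ₗ[R] Module.End R V) ≤ B₂ := by
  rintro _ ⟨a, ha, rfl⟩
  rw [LinearEquiv.coe_coe, conj_eq_fst_map_inl hg he ⟨a, ha⟩]
  exact (e (⟨a, ha⟩, 0)).1.2

theorem exists_conj_of_map_bracket (h₁ : 1 ∈ B₁) (h₂ : 1 ∈ B₂)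
    (he : ∀ u v, e (bracket B₁ u v) = bracket B₂ (e u) (e v)) :
    ∃ g : V ≃ₗ[R] V, B₂ = B₁.map (g.conj : Module.End R V →ₗ[R] Module.End R V) := by
  obtain ⟨g, hg⟩ := exists_linearEquiv_map_inr h₁ h₂ he
  have hg_symm : ∀ x, e.symm (0, x) = (0, g.symm x) := fun x => by
    rw [e.symm_apply_eq, hg, g.apply_symm_apply]
  refine ⟨g, le_antisymm (fun b hb => ⟨g.symm.conj b, ?_, by simp⟩) (map_conj_le hg he)⟩
  exact map_conj_le hg_symm (symm_map_bracket he) ⟨b, hb, rfl⟩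

end

theorem exists_map_bracket_of_conj {B₁ B₂ : Submodule R (Module.End R V)} (g : V ≃ₗ[R] V)
    (hB : B₂ = B₁.map (g.conj : Module.End R V →ₗ[R] Module.End R V)) :
    ∃ e : (B₁ × V) ≃ₗ[R] (B₂ × V), ∀ u v, e (bracket B₁ u v) = bracket B₂ (e u) (e v) := by
  subst hB
  refine ⟨(g.conj.submoduleMap B₁).prodCongr g, fun u v => ?_⟩
  ext
  · simp [bracket]
  · simp [bracket, LinearEquiv.submoduleMap_apply]

end SemidirectSum

open SemidirectSum in
theorem stmt6_general {V : Type*} [AddCommGroup V] [Module ℝ V]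
    (B₁ B₂ : Submodule ℝ (Module.End ℝ V))
    (hmax₁ : ∀ ψ : Module.End ℝ V, (∀ a ∈ B₁, ψ * a = a * ψ) → ψ ∈ B₁)
    (hmax₂ : ∀ ψ : Module.End ℝ V, (∀ a ∈ B₂, ψ * a = a * ψ) → ψ ∈ B₂) :
    (∃ e : (B₁ × V) ≃ₗ[ℝ] (B₂ × V),
      ∀ u v : B₁ × V,
        e ((0 : B₁), (u.1 : Module.End ℝ V) v.2 - (v.1 : Module.End ℝ V) u.2) =
          ((0 : B₂), ((e u).1 : Module.End ℝ V) (e v).2 - ((e v).1 : Module.End ℝ V) (e u).2)) ↔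
    (∃ g : V ≃ₗ[ℝ] V, B₂ = B₁.map (g.conj : Module.End ℝ V →ₗ[ℝ] Module.End ℝ V)) := by
  have h₁ : 1 ∈ B₁ := hmax₁ 1 fun a _ => by rw [one_mul, mul_one]
  have h₂ : 1 ∈ B₂ := hmax₂ 1 fun a _ => by rw [one_mul, mul_one]
  constructor
  · rintro ⟨e, he⟩
    exact exists_conj_of_map_bracket h₁ h₂ he
  · rintro ⟨g, hB⟩
    exact exists_map_bracket_of_conj g hB

/-- For two maximal abelian subalgebras `B₁, B₂` of `gl(V)` of dimension `n = dim V`, the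
semidirect sums `B₁ ⋉ V` and `B₂ ⋉ V` are isomorphic as Lie algebras iff `B₁` and `B₂` are
conjugate by some `φ ∈ GL(V)`. -/
theorem stmt6 {V : Type*} [AddCommGroup V] [Module ℝ V] [FiniteDimensional ℝ V]
    (B₁ B₂ : Submodule ℝ (Module.End ℝ V))
    (hd₁ : Module.finrank ℝ B₁ = Module.finrank ℝ V)
    (hd₂ : Module.finrank ℝ B₂ = Module.finrank ℝ V)
    (habel₁ : ∀ a ∈ B₁, ∀ b ∈ B₁, a * b = b * a)
    (hmax₁ : ∀ ψ : Module.End ℝ V, (∀ a ∈ B₁, ψ * a = a * ψ) → ψ ∈ B₁)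
    (habel₂ : ∀ a ∈ B₂, ∀ b ∈ B₂, a * b = b * a)
    (hmax₂ : ∀ ψ : Module.End ℝ V, (∀ a ∈ B₂, ψ * a = a * ψ) → ψ ∈ B₂) :
    (∃ e : (B₁ × V) ≃ₗ[ℝ] (B₂ × V),
      ∀ u v : B₁ × V,
        e ((0 : B₁), (u.1 : Module.End ℝ V) v.2 - (v.1 : Module.End ℝ V) u.2) =
          ((0 : B₂), ((e u).1 : Module.End ℝ V) (e v).2 - ((e v).1 : Module.End ℝ V) (e u).2)) ↔
    (∃ g : V ≃ₗ[ℝ] V, B₂ = B₁.map (g.conj : Module.End ℝ V →ₗ[ℝ] Module.End ℝ V)) :=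
  stmt6_general B₁ B₂ hmax₁ hmax₂
end

section
/- Let V be a real vector space, B₁, B₂ maximal abelian subalgebras of gl(V) with dim V = dim B₁ = dim B₂, and ψ : B₁ ⋉ V → B₂ ⋉ V a Lie algebra isomorphism. Then there exist φ ∈ GL(V) and x₀ ∈ V such that φ B₁ φ^{-1} = B₂ and for all (a,x) ∈ B₁ ⋉ V, ψ(a,x) = (φ∘a∘φ^{-1}, (φ∘a∘φ^{-1})(x₀) + φ(x)). -/
/-- Any Lie algebra isomorphism `ψ : B₁ ⋉ V → B₂ ⋉ V` between semidirect sums of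
`n`-dimensional MASAs of `gl(V)` with `V` is induced by some `φ ∈ GL(V)` conjugating `B₁`
onto `B₂` together with a vector `x₀ ∈ V`:
`ψ(a,x) = (φ∘a∘φ⁻¹, (φ∘a∘φ⁻¹)(x₀) + φ(x))`. -/
theorem stmt7 {V : Type*} [AddCommGroup V] [Module ℝ V] [FiniteDimensional ℝ V]
    (B₁ B₂ : Submodule ℝ (Module.End ℝ V))
    (hd₁ : Module.finrank ℝ B₁ = Module.finrank ℝ V)
    (hd₂ : Module.finrank ℝ B₂ = Module.finrank ℝ V)
    (habel₁ : ∀ a ∈ B₁, ∀ b ∈ B₁, a * b = b * a)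
    (hmax₁ : ∀ ψ' : Module.End ℝ V, (∀ a ∈ B₁, ψ' * a = a * ψ') → ψ' ∈ B₁)
    (habel₂ : ∀ a ∈ B₂, ∀ b ∈ B₂, a * b = b * a)
    (hmax₂ : ∀ ψ' : Module.End ℝ V, (∀ a ∈ B₂, ψ' * a = a * ψ') → ψ' ∈ B₂)
    (ψ : (B₁ × V) ≃ₗ[ℝ] (B₂ × V))
    (hψ : ∀ u v : B₁ × V,
      ψ ((0 : B₁), (u.1 : Module.End ℝ V) v.2 - (v.1 : Module.End ℝ V) u.2) =
        ((0 : B₂), ((ψ u).1 : Module.End ℝ V) (ψ v).2 - ((ψ v).1 : Module.End ℝ V) (ψ u).2)) :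
    ∃ (g : V ≃ₗ[ℝ] V) (x₀ : V),
      B₂ = B₁.map (g.conj : Module.End ℝ V →ₗ[ℝ] Module.End ℝ V) ∧
      ∀ (a : B₁) (x : V),
        ((ψ (a, x)).1 : Module.End ℝ V) = g.conj (a : Module.End ℝ V) ∧
        (ψ (a, x)).2 = (g.conj (a : Module.End ℝ V)) x₀ + g x := by
  have h1 : (1 : Module.End ℝ V) ∈ B₁ := hmax₁ 1 fun a _ => by rw [one_mul, mul_one]
  have h2 : (1 : Module.End ℝ V) ∈ B₂ := hmax₂ 1 fun a _ => by rw [one_mul, mul_one]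
  -- the first component of ψ (0, x) vanishes
  have hfst : ∀ x : V, (ψ ((0 : B₁), x)).1 = 0 := by
    intro x
    have h := hψ (⟨1, h1⟩, 0) (0, x)
    simp only [Submodule.coe_zero, LinearMap.zero_apply, Module.End.one_apply, sub_zero] at h
    exact congrArg Prod.fst h
  -- same for ψ.symm
  have hfst' : ∀ y : V, (ψ.symm ((0 : B₂), y)).1 = 0 := by
    intro y
    have h := hψ (ψ.symm (⟨1, h2⟩, 0)) (ψ.symm (0, y))
    rw [ψ.apply_symm_apply, ψ.apply_symm_apply] at h
    simp only [Submodule.coe_zero, LinearMap.zero_apply, Module.End.one_apply, sub_zero] at h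
    have h' := congrArg (fun p => (ψ.symm p).1) h
    simp only [ψ.symm_apply_apply] at h'
    exact h'.symm
  set gl : V →ₗ[ℝ] V :=
    (LinearMap.snd ℝ B₂ V).comp (ψ.toLinearMap.comp (LinearMap.inr ℝ (↥B₁) V)) with hgl
  set gl' : V →ₗ[ℝ] V :=
    (LinearMap.snd ℝ B₁ V).comp (ψ.symm.toLinearMap.comp (LinearMap.inr ℝ (↥B₂) V)) with hgl'
  have hglx : ∀ x : V, gl x = (ψ ((0 : B₁), x)).2 := fun _ => rfl
  have hglx' : ∀ y : V, gl' y = (ψ.symm ((0 : B₂), y)).2 := fun _ => rfl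
  have h0 : ∀ x : V, ψ ((0 : B₁), x) = ((0 : B₂), gl x) := fun x => Prod.ext (hfst x) rfl
  have h0' : ∀ y : V, ψ.symm ((0 : B₂), y) = ((0 : B₁), gl' y) :=
    fun y => Prod.ext (hfst' y) rfl
  have key1 : ∀ x : V, gl' (gl x) = x := by
    intro x
    have h : ψ.symm ((0 : B₂), gl x) = ((0 : B₁), x) := by
      rw [← h0 x, ψ.symm_apply_apply]
    have := congrArg Prod.snd h
    simpa [hglx'] using this
  have key2 : ∀ y : V, gl (gl' y) = y := by
    intro y
    have h : ψ ((0 : B₁), gl' y) = ((0 : B₂), y) := by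
      rw [← h0' y, ψ.apply_symm_apply]
    have := congrArg Prod.snd h
    simpa [hglx] using this
  set g : V ≃ₗ[ℝ] V :=
    LinearEquiv.ofLinear gl gl' (LinearMap.ext key2) (LinearMap.ext key1) with hg
  have hga : ∀ x : V, g x = gl x := fun _ => rfl
  have hgs : ∀ y : V, g.symm y = gl' y := fun _ => rfl
  -- conjugation relation
  have hcomm : ∀ (a : B₁) (x : V),
      ((ψ (a, (0 : V))).1 : Module.End ℝ V) (gl x) = gl ((a : Module.End ℝ V) x) := by
    intro a x
    have h := hψ (a, 0) (0, x)
    simp only [Submodule.coe_zero, LinearMap.zero_apply, sub_zero, map_zero] at h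
    rw [h0 x, h0 ((a : Module.End ℝ V) x)] at h
    have := congrArg Prod.snd h
    simp only [Submodule.coe_zero, LinearMap.zero_apply, sub_zero] at this
    exact this.symm
  have hψ1 : ∀ a : B₁,
      ((ψ (a, (0 : V))).1 : Module.End ℝ V) = g.conj (a : Module.End ℝ V) := by
    intro a
    ext x
    rw [LinearEquiv.conj_apply_apply, hgs, hga, ← hcomm a (gl' x), key2]
  -- ψ on a general element splits
  have hsplit : ∀ (a : B₁) (x : V), ψ (a, x) = ψ (a, (0 : V)) + ψ ((0 : B₁), x) := by
    intro a x
    rw [← map_add]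
    congr 1
    simp
  have hfst2 : ∀ (a : B₁) (x : V), (ψ (a, x)).1 = (ψ (a, (0 : V))).1 := by
    intro a x
    rw [hsplit a x, Prod.fst_add, hfst x, add_zero]
  -- the translation vector
  set x₀ : V := (ψ ((⟨1, h1⟩ : B₁), (0 : V))).2 with hx₀
  have hone : ((ψ ((⟨1, h1⟩ : B₁), (0 : V))).1 : Module.End ℝ V) = 1 := by
    rw [hψ1]
    ext y
    simp [LinearEquiv.conj_apply_apply]
  have hsnd0 : ∀ a : B₁,
      (ψ (a, (0 : V))).2 = ((ψ (a, (0 : V))).1 : Module.End ℝ V) x₀ := by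
    intro a
    have h := hψ (a, 0) (⟨1, h1⟩, 0)
    simp only [map_zero, Module.End.one_apply, sub_zero, sub_self] at h
    have h' : (0 : B₂ × V) = _ := (map_zero ψ).symm.trans h
    have := congrArg Prod.snd h'
    simp only [Prod.snd_zero] at this
    rw [hone, ← hx₀] at this
    have := this.symm
    rw [sub_eq_zero] at this
    simpa using this.symm
  refine ⟨g, x₀, ?_, ?_⟩
  · apply le_antisymm
    · intro b hb
      set p := ψ.symm (⟨b, hb⟩, (0 : V)) with hp
      refine Submodule.mem_map.2 ⟨(p.1 : Module.End ℝ V), p.1.2, ?_⟩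
      have : ψ (p.1, p.2) = (⟨b, hb⟩, (0 : V)) := by
        rw [hp]; exact ψ.apply_symm_apply _
      have hfstp := congrArg Prod.fst this
      simp only at hfstp
      have : ((ψ (p.1, p.2)).1 : Module.End ℝ V) = b := congrArg Subtype.val hfstp
      rw [hfst2 p.1 p.2, hψ1 p.1] at this
      simpa using this
    · rintro b hb
      rcases Submodule.mem_map.1 hb with ⟨a, ha, rfl⟩
      have hm := (ψ ((⟨a, ha⟩ : B₁), (0 : V))).1.2
      rw [hψ1 ⟨a, ha⟩] at hm
      simpa using hm
  · intro a x
    constructor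
    · rw [hfst2 a x, hψ1 a]
    · rw [hsplit a x, Prod.snd_add, hsnd0 a, hψ1 a, h0 x]
      simp [hga]
end

section
/- Let A be an (n−1)-dimensional maximal abelian subalgebra of sl(n,ℝ) consisting of nilpotent matrices with A^{p+1} = 0 and A^p ≠ 0 for some p ≥ 1 (where A^k denotes the span of all products of k elements of A), and suppose the semidirect sum Lie algebra (ℝ·Id ⊕ A) ⋉ ℝⁿ is Frobenius. Then the image A^p(ℝⁿ) is one-dimensional. -/
/-- If `A` is an `(n-1)`-dimensional MASA of `sl(n,ℝ)` with `A^{p+1} = 0`, `A^p ≠ 0` for some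
`p ≥ 1`, and the semidirect sum `(ℝ·Id ⊕ A) ⋉ ℝⁿ` is a Frobenius Lie algebra, then the image
`A^p(ℝⁿ)` is one-dimensional. -/
theorem stmt8 {n p : ℕ} (hp : 1 ≤ p)
    (A : Submodule ℝ (Matrix (Fin n) (Fin n) ℝ))
    (htrace : ∀ a ∈ A, Matrix.trace a = 0)
    (habel : ∀ a ∈ A, ∀ b ∈ A, a * b = b * a)
    (hmasa : ∀ b : Matrix (Fin n) (Fin n) ℝ, Matrix.trace b = 0 →
      (∀ a ∈ A, b * a = a * b) → b ∈ A)
    (hdim : Module.finrank ℝ A = n - 1)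
    (hnil : ∀ f : Fin (p + 1) → Matrix (Fin n) (Fin n) ℝ, (∀ i, f i ∈ A) →
      (List.ofFn f).prod = 0)
    (hpnz : ∃ f : Fin p → Matrix (Fin n) (Fin n) ℝ, (∀ i, f i ∈ A) ∧ (List.ofFn f).prod ≠ 0)
    (B : Submodule ℝ (Matrix (Fin n) (Fin n) ℝ))
    (hB : B = Submodule.span ℝ {(1 : Matrix (Fin n) (Fin n) ℝ)} ⊔ A)
    (hFrob : ∃ β : (B × (Fin n → ℝ)) →ₗ[ℝ] ℝ,
      ∀ u : B × (Fin n → ℝ),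
        (∀ v : B × (Fin n → ℝ),
          -β ((0 : B), (u.1 : Matrix (Fin n) (Fin n) ℝ).mulVec v.2 -
            (v.1 : Matrix (Fin n) (Fin n) ℝ).mulVec u.2) = 0) → u = 0) :
    Module.finrank ℝ (Submodule.span ℝ
      {v : Fin n → ℝ | ∃ (f : Fin p → Matrix (Fin n) (Fin n) ℝ) (x : Fin n → ℝ),
        (∀ i, f i ∈ A) ∧ v = (List.ofFn f).prod.mulVec x}) = 1 := by
  classical
  obtain ⟨β, hβ⟩ := hFrob
  obtain ⟨f₀, hf₀, hne₀⟩ := hpnz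
  -- n ≥ 1
  have hn : 1 ≤ n := by
    rcases Nat.eq_zero_or_pos n with h | h
    · subst h
      exact absurd (Subsingleton.elim _ _) hne₀
    · exact h
  have hAB : A ≤ B := hB ▸ le_sup_right
  set φ : (Fin n → ℝ) →ₗ[ℝ] ℝ := β ∘ₗ LinearMap.inr ℝ ↥B (Fin n → ℝ) with hφ
  have key : ∀ b, ∀ hb : b ∈ B, (∀ x, φ (Matrix.mulVec b x) = 0) → b = 0 := by
    intro b hb h
    have h0 := hβ (⟨b, hb⟩, 0) ?_
    · have := congrArg (fun u : ↥B × (Fin n → ℝ) => (u.1 : Matrix (Fin n) (Fin n) ℝ)) h0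
      simpa using this
    · intro v
      have := h v.2
      simp only [Matrix.mulVec_zero, sub_zero, neg_eq_zero]
      simpa [hφ] using this
  -- the map A → Dual, a ↦ φ ∘ mulVec a
  let T : ↥A →ₗ[ℝ] Module.Dual ℝ (Fin n → ℝ) :=
    (LinearMap.llcomp ℝ (Fin n → ℝ) (Fin n → ℝ) ℝ φ) ∘ₗ
      (Matrix.toLin' : Matrix (Fin n) (Fin n) ℝ ≃ₗ[ℝ] _).toLinearMap ∘ₗ A.subtype
  have hTapp : ∀ (a : ↥A) (x : Fin n → ℝ), T a x = φ ((a : Matrix (Fin n) (Fin n) ℝ).mulVec x) := by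
    intro a x
    simp [T, Matrix.toLin'_apply]
  have hT : Function.Injective T := by
    rw [← LinearMap.ker_eq_bot]
    apply (Submodule.eq_bot_iff _).2
    intro a ha
    rw [LinearMap.mem_ker] at ha
    have : (a : Matrix (Fin n) (Fin n) ℝ) = 0 := by
      apply key _ (hAB a.2)
      intro x
      rw [← hTapp, ha]
      rfl
    exact Subtype.ext this
  set S := LinearMap.range T with hS
  have hSrank : Module.finrank ℝ S = n - 1 := by
    rw [hS, LinearMap.finrank_range_of_inj hT, hdim]
  have hcoann : Module.finrank ℝ S.dualCoannihilator = 1 := by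
    have := Subspace.finrank_add_finrank_dualCoannihilator_eq S
    rw [hSrank, Module.finrank_fin_fun] at this
    omega
  set V := Submodule.span ℝ
      {v : Fin n → ℝ | ∃ (f : Fin p → Matrix (Fin n) (Fin n) ℝ) (x : Fin n → ℝ),
        (∀ i, f i ∈ A) ∧ v = (List.ofFn f).prod.mulVec x} with hV
  have hVle : V ≤ S.dualCoannihilator := by
    rw [hV, Submodule.span_le]
    rintro v ⟨f, x, hf, rfl⟩
    rw [SetLike.mem_coe, Submodule.mem_dualCoannihilator]
    rintro ψ ⟨a, rfl⟩
    rw [hTapp, Matrix.mulVec_mulVec]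
    have hprod : (a : Matrix (Fin n) (Fin n) ℝ) * (List.ofFn f).prod = 0 := by
      have := hnil (Fin.cons (a : Matrix (Fin n) (Fin n) ℝ) f)
        (fun i => by
          refine Fin.cases ?_ ?_ i
          · simpa using a.2
          · intro j; simpa using hf j)
      rwa [List.ofFn_succ] at this
      -- goal after rw? adjust below
    rw [hprod, Matrix.zero_mulVec, map_zero]
  -- nonzero vector in V
  have hx : ∃ x, (List.ofFn f₀).prod.mulVec x ≠ 0 := by
    by_contra h
    push_neg at h
    apply hne₀
    ext i j
    have := congrFun (h (Pi.single j 1)) i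
    simpa [Matrix.mulVec_single] using this
  obtain ⟨x₀, hx₀⟩ := hx
  have hmem : (List.ofFn f₀).prod.mulVec x₀ ∈ V :=
    Submodule.subset_span ⟨f₀, x₀, hf₀, rfl⟩
  have hVpos : 0 < Module.finrank ℝ V := by
    rw [Module.finrank_pos_iff]
    exact ⟨⟨⟨_, hmem⟩, 0, fun h => hx₀ (by simpa using congrArg Subtype.val h)⟩⟩
  have hVle1 : Module.finrank ℝ V ≤ 1 := hcoann ▸ Submodule.finrank_mono hVle
  omega
end

section
/- Let A be an (n−1)-dimensional maximal abelian subalgebra of sl(n,ℝ) with A² = 0 (all products of two elements vanish) such that (ℝ·Id ⊕ A) ⋉ ℝⁿ is a Frobenius Lie algebra. Then A is conjugate in gl(n,ℝ) to the algebra spanned by the elementary matrices E_{1,j}, j = 2,…,n. -/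
/-!
Restrict the Frobenius functional to `γ : ℝⁿ → ℝ`. Nondegeneracy against the elements `(a, 0)`
says that `a ↦ γ ∘ a` is injective on `A`, and it lands in the annihilator of the common kernel
`K` of `A`, so `n - 1 = dim A ≤ n - dim K`. Since `A² = 0`, each `a ∈ A` maps `ℝⁿ` into `K`, so
`K ≠ 0` and therefore `K` is a line `ℝ ℓ`: every `a ∈ A` kills `ℓ` and has image in `ℝ ℓ`.
In a basis starting with `ℓ` such an `a` is supported on the first row off the diagonal, and
these matrices span a space of dimension `n - 1 = dim A`.
-/

open Matrix Module

section

variable {𝕜 ι : Type*} [Field 𝕜] [Fintype ι]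

def commonKer (A : Submodule 𝕜 (Matrix ι ι 𝕜)) : Submodule 𝕜 (ι → 𝕜) :=
  ⨅ a : A, LinearMap.ker (mulVecLin (a : Matrix ι ι 𝕜))

variable {A : Submodule 𝕜 (Matrix ι ι 𝕜)}

lemma mem_commonKer {x : ι → 𝕜} : x ∈ commonKer A ↔ ∀ a ∈ A, a *ᵥ x = 0 := by
  simp [commonKer]

lemma mulVec_mem_commonKer (hA2 : ∀ a ∈ A, ∀ b ∈ A, a * b = 0) {a : Matrix ι ι 𝕜} (ha : a ∈ A)
    (x : ι → 𝕜) : a *ᵥ x ∈ commonKer A :=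
  mem_commonKer.2 fun b hb => by rw [mulVec_mulVec, hA2 b hb a ha, zero_mulVec]

lemma commonKer_ne_bot [Nonempty ι] (hA2 : ∀ a ∈ A, ∀ b ∈ A, a * b = 0) :
    commonKer A ≠ ⊥ := by
  rw [Submodule.ne_bot_iff]
  by_cases hA : ∃ a ∈ A, ∃ x, a *ᵥ x ≠ 0
  · obtain ⟨a, ha, x, hx⟩ := hA
    exact ⟨_, mulVec_mem_commonKer hA2 ha x, hx⟩
  · push Not at hA
    exact ⟨1, mem_commonKer.2 fun a ha => hA a ha 1, one_ne_zero⟩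

lemma finrank_add_finrank_commonKer_le (γ : Dual 𝕜 (ι → 𝕜))
    (hγ : ∀ a ∈ A, (∀ x, γ (a *ᵥ x) = 0) → a = 0) :
    finrank 𝕜 A + finrank 𝕜 (commonKer A) ≤ Fintype.card ι := by
  let μ : A →ₗ[𝕜] (commonKer A).dualAnnihilator :=
    { toFun a := ⟨γ ∘ₗ mulVecLin (a : Matrix ι ι 𝕜), (Submodule.mem_dualAnnihilator _).2
        fun w hw => by simp [mem_commonKer.1 hw a a.2]⟩
      map_add' a b := by ext; simp
      map_smul' c a := by ext; simp }
  have hμ : Function.Injective μ := (injective_iff_map_eq_zero μ).2 fun a h =>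
    Subtype.ext (hγ a a.2 fun x => congr($h x))
  have := LinearMap.finrank_le_finrank_of_injective hμ
  have := Subspace.finrank_add_finrank_dualAnnihilator_eq (commonKer A)
  rw [finrank_fintype_fun_eq_card] at this
  omega

lemma exists_commonKer_eq_span_singleton [Nonempty ι] (hA2 : ∀ a ∈ A, ∀ b ∈ A, a * b = 0)
    (γ : Dual 𝕜 (ι → 𝕜)) (hγ : ∀ a ∈ A, (∀ x, γ (a *ᵥ x) = 0) → a = 0)
    (hdim : finrank 𝕜 A = Fintype.card ι - 1) :
    ∃ ℓ : ι → 𝕜, ℓ ≠ 0 ∧ commonKer A = 𝕜 ∙ ℓ := by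
  obtain ⟨ℓ, hℓK, hℓ⟩ := (Submodule.ne_bot_iff _).1 (commonKer_ne_bot hA2)
  refine ⟨ℓ, hℓ, (Submodule.eq_of_le_of_finrank_le
    ((Submodule.span_singleton_le_iff_mem _ _).2 hℓK) ?_).symm⟩
  have := finrank_add_finrank_commonKer_le γ hγ
  have := Fintype.card_pos (α := ι)
  rw [finrank_span_singleton hℓ]
  omega

lemma eq_zero_of_frobenius {B : Submodule 𝕜 (Matrix ι ι 𝕜)} {β : (B × (ι → 𝕜)) →ₗ[𝕜] 𝕜}
    (hβ : ∀ u : B × (ι → 𝕜), (∀ v : B × (ι → 𝕜),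
      -β ((0 : B), (u.1 : Matrix ι ι 𝕜) *ᵥ v.2 - (v.1 : Matrix ι ι 𝕜) *ᵥ u.2) = 0) → u = 0)
    {b : B} (hb : ∀ x, β (0, (b : Matrix ι ι 𝕜) *ᵥ x) = 0) : b = 0 :=
  congrArg Prod.fst (hβ (b, 0) fun v => by simp [hb])

end

section

variable {𝕜 ι : Type*} [Field 𝕜] [Fintype ι] [DecidableEq ι]

variable (𝕜) in
def singleRowSpan (i₀ : ι) : Submodule 𝕜 (Matrix ι ι 𝕜) :=
  Submodule.span 𝕜 (Set.range fun j : {j : ι // j ≠ i₀} => single i₀ j.val (1 : 𝕜))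

lemma finrank_singleRowSpan_le (i₀ : ι) :
    finrank 𝕜 (singleRowSpan 𝕜 i₀) ≤ Fintype.card ι - 1 :=
  (finrank_range_le_card _).trans_eq (by simp [Fintype.card_subtype_compl])

lemma mem_singleRowSpan {i₀ : ι} {N : Matrix ι ι 𝕜} (hcol : N *ᵥ Pi.single i₀ 1 = 0)
    (hrow : ∀ x, N *ᵥ x ∈ 𝕜 ∙ Pi.single i₀ 1) : N ∈ singleRowSpan 𝕜 i₀ := by
  have hN : ∀ i j, i ≠ i₀ → N i j = 0 := fun i j hi => by
    obtain ⟨c, hc⟩ := Submodule.mem_span_singleton.1 (hrow (Pi.single j 1))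
    simpa [hi] using (congr_fun hc i).symm
  rw [matrix_eq_sum_single N]
  refine Submodule.sum_mem _ fun i _ => Submodule.sum_mem _ fun j _ => ?_
  rcases eq_or_ne i i₀ with rfl | hi
  · rcases eq_or_ne j i with rfl | hj
    · simp [show N j j = 0 by simpa using congr_fun hcol j]
    · rw [← mul_one (N i j), ← smul_eq_mul, ← smul_single]
      exact Submodule.smul_mem _ _ (Submodule.subset_span ⟨⟨j, hj⟩, rfl⟩)
  · simp [hN i j hi]

lemma exists_units_mulVec_single_eq {ℓ : ι → 𝕜} (hℓ : ℓ ≠ 0) (i₀ : ι) :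
    ∃ P : (Matrix ι ι 𝕜)ˣ, (P : Matrix ι ι 𝕜) *ᵥ Pi.single i₀ 1 = ℓ := by
  have he : (Pi.single i₀ 1 : ι → 𝕜) ≠ 0 := by simp
  obtain ⟨g, hg⟩ := Submodule.exists_linearEquiv_restrict_eq
    (LinearEquiv.coord 𝕜 _ _ he ≪≫ₗ LinearEquiv.toSpanNonzeroSingleton 𝕜 _ _ hℓ)
  let P : GL ι 𝕜 := GeneralLinearGroup.toLin.symm
    ((LinearMap.GeneralLinearGroup.generalLinearEquiv 𝕜 _).symm g)
  refine ⟨P, ?_⟩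
  calc (P : Matrix ι ι 𝕜) *ᵥ Pi.single i₀ 1
      = (GeneralLinearGroup.toLin P : (ι → 𝕜) →ₗ[𝕜] ι → 𝕜) (Pi.single i₀ 1) :=
        (GeneralLinearGroup.toLin_apply _ _).symm
    _ = g (Pi.single i₀ 1) := by simp only [P, MulEquiv.apply_symm_apply]; rfl
    _ = ℓ := by
        simpa [LinearEquiv.coord_self] using (hg ⟨_, Submodule.mem_span_singleton_self _⟩).symm

lemma exists_conj_eq_singleRowSpan {A : Submodule 𝕜 (Matrix ι ι 𝕜)} {ℓ : ι → 𝕜} (hℓ : ℓ ≠ 0)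
    (hker : ∀ a ∈ A, a *ᵥ ℓ = 0) (hrange : ∀ a ∈ A, ∀ x, a *ᵥ x ∈ 𝕜 ∙ ℓ)
    (hdim : finrank 𝕜 A = Fintype.card ι - 1) (i₀ : ι) :
    ∃ P : (Matrix ι ι 𝕜)ˣ, (fun M => (P : Matrix ι ι 𝕜) * M * ((P⁻¹ : (Matrix ι ι 𝕜)ˣ) :
      Matrix ι ι 𝕜)) '' A = (singleRowSpan 𝕜 i₀ : Set (Matrix ι ι 𝕜)) := by
  obtain ⟨P, hP⟩ := exists_units_mulVec_single_eq hℓ i₀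
  have hPinv : ((P⁻¹ : (Matrix ι ι 𝕜)ˣ) : Matrix ι ι 𝕜) *ᵥ ℓ = Pi.single i₀ 1 := by
    rw [← hP, mulVec_mulVec, Units.inv_mul, one_mulVec]
  let conj :=
    (MulSemiringAction.toAlgEquiv 𝕜 (Matrix ι ι 𝕜) (ConjAct.toConjAct P⁻¹)).toLinearEquiv
  have hconj : ∀ M, conj M = (↑P⁻¹ : Matrix ι ι 𝕜) * M * (P : Matrix ι ι 𝕜) :=
    fun M => ConjAct.units_smul_def _ M
  refine ⟨P⁻¹, ?_⟩
  suffices A.map conj.toLinearMap = singleRowSpan 𝕜 i₀ by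
    rw [← this, Submodule.map_coe]
    exact congrArg (· '' _) (funext fun M => (hconj M).symm)
  refine Submodule.eq_of_le_of_finrank_le ?_ ?_
  · rintro _ ⟨M, hM, rfl⟩
    rw [LinearEquiv.coe_coe]
    have hmulVec : ∀ x, conj M *ᵥ x = (↑P⁻¹ : Matrix ι ι 𝕜) *ᵥ (M *ᵥ (P *ᵥ x)) := fun x => by
      simp only [hconj, mulVec_mulVec, Matrix.mul_assoc]
    refine mem_singleRowSpan (by simp [hmulVec, hP, hker M hM]) fun x => ?_
    obtain ⟨c, hc⟩ := Submodule.mem_span_singleton.1 (hrange M hM (P *ᵥ x))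
    rw [hmulVec, ← hc, mulVec_smul, hPinv]
    exact Submodule.smul_mem _ _ (Submodule.mem_span_singleton_self _)
  · rw [LinearEquiv.finrank_map_eq, hdim]
    exact finrank_singleRowSpan_le i₀

end

theorem stmt9_general {n : ℕ} (hn : 0 < n)
    (A : Submodule ℝ (Matrix (Fin n) (Fin n) ℝ))
    (hA2 : ∀ a ∈ A, ∀ b ∈ A, a * b = 0)
    (hdim : Module.finrank ℝ A = n - 1)
    (B : Submodule ℝ (Matrix (Fin n) (Fin n) ℝ))
    (hB : B = Submodule.span ℝ {(1 : Matrix (Fin n) (Fin n) ℝ)} ⊔ A)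
    (hFrob : ∃ β : (B × (Fin n → ℝ)) →ₗ[ℝ] ℝ,
      ∀ u : B × (Fin n → ℝ),
        (∀ v : B × (Fin n → ℝ),
          -β ((0 : B), (u.1 : Matrix (Fin n) (Fin n) ℝ).mulVec v.2 -
            (v.1 : Matrix (Fin n) (Fin n) ℝ).mulVec u.2) = 0) → u = 0) :
    ∃ P : (Matrix (Fin n) (Fin n) ℝ)ˣ,
      (fun M => (P : Matrix (Fin n) (Fin n) ℝ) * M * ((P⁻¹ : (Matrix (Fin n) (Fin n) ℝ)ˣ) :
        Matrix (Fin n) (Fin n) ℝ)) '' (A : Set (Matrix (Fin n) (Fin n) ℝ)) =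
      (Submodule.span ℝ (Set.range fun j : {j : Fin n // j ≠ ⟨0, hn⟩} =>
        Matrix.single (⟨0, hn⟩ : Fin n) j.val (1 : ℝ)) :
          Set (Matrix (Fin n) (Fin n) ℝ)) := by
  obtain ⟨β, hβ⟩ := hFrob
  have hAB : A ≤ B := hB ▸ le_sup_right
  have hγ : ∀ a ∈ A, (∀ x, (β ∘ₗ LinearMap.inr ℝ B _) (a *ᵥ x) = 0) → a = 0 := fun a ha h =>
    congrArg Subtype.val (eq_zero_of_frobenius hβ (b := ⟨a, hAB ha⟩) h)
  have : Nonempty (Fin n) := ⟨⟨0, hn⟩⟩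
  have hdim' : finrank ℝ A = Fintype.card (Fin n) - 1 := by rw [hdim, Fintype.card_fin]
  obtain ⟨ℓ, hℓ, hK⟩ := exists_commonKer_eq_span_singleton hA2 _ hγ hdim'
  exact exists_conj_eq_singleRowSpan hℓ
    (fun a ha => mem_commonKer.1 (hK ▸ Submodule.mem_span_singleton_self ℓ) a ha)
    (fun a ha x => hK ▸ mulVec_mem_commonKer hA2 ha x) hdim' ⟨0, hn⟩

/-- If `A` is an `(n-1)`-dimensional MASA of `sl(n,ℝ)` with `A² = 0` and
`(ℝ·Id ⊕ A) ⋉ ℝⁿ` is a Frobenius Lie algebra, then `A` is conjugate in `gl(n,ℝ)` to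
the span of the elementary matrices `E_{1,j}`, `j = 2,…,n`. -/
theorem stmt9 {n : ℕ} (hn : 0 < n)
    (A : Submodule ℝ (Matrix (Fin n) (Fin n) ℝ))
    (htrace : ∀ a ∈ A, Matrix.trace a = 0)
    (hA2 : ∀ a ∈ A, ∀ b ∈ A, a * b = 0)
    (hmasa : ∀ b : Matrix (Fin n) (Fin n) ℝ, Matrix.trace b = 0 →
      (∀ a ∈ A, b * a = a * b) → b ∈ A)
    (hdim : Module.finrank ℝ A = n - 1)
    (B : Submodule ℝ (Matrix (Fin n) (Fin n) ℝ))
    (hB : B = Submodule.span ℝ {(1 : Matrix (Fin n) (Fin n) ℝ)} ⊔ A)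
    (hFrob : ∃ β : (B × (Fin n → ℝ)) →ₗ[ℝ] ℝ,
      ∀ u : B × (Fin n → ℝ),
        (∀ v : B × (Fin n → ℝ),
          -β ((0 : B), (u.1 : Matrix (Fin n) (Fin n) ℝ).mulVec v.2 -
            (v.1 : Matrix (Fin n) (Fin n) ℝ).mulVec u.2) = 0) → u = 0) :
    ∃ P : (Matrix (Fin n) (Fin n) ℝ)ˣ,
      (fun M => (P : Matrix (Fin n) (Fin n) ℝ) * M * ((P⁻¹ : (Matrix (Fin n) (Fin n) ℝ)ˣ) :
        Matrix (Fin n) (Fin n) ℝ)) '' (A : Set (Matrix (Fin n) (Fin n) ℝ)) =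
      (Submodule.span ℝ (Set.range fun j : {j : Fin n // j ≠ ⟨0, hn⟩} =>
        Matrix.single (⟨0, hn⟩ : Fin n) j.val (1 : ℝ)) :
          Set (Matrix (Fin n) (Fin n) ℝ)) :=
  stmt9_general hn A hA2 hdim B hB hFrob
end

section
/- Let V be a real vector space with V = E₁ ⊕ E₂, φ ∈ End(V) nonderogatory with φ(E₁) ⊆ E₁ and φ(E₂) ⊆ E₂, and let φ_j be the restriction of φ to E_j. Then the Lie algebra ℝ[φ] ⋉ V is isomorphic to the direct sum of the Lie algebras ℝ[φ₁] ⋉ E₁ and ℝ[φ₂] ⋉ E₂. -/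
/-!
Every element of `K[φ]` is a polynomial in `φ`, so it preserves `E₁` and `E₂`, and restriction
gives a linear map `K[φ] → K[φ₁] × K[φ₂]`, injective because `V = E₁ ⊕ E₂`. Since
`dim K[f] = deg (minpoly f) ≤ deg (charpoly f)` with equality for nonderogatory `φ`, we get
`dim K[φ] = dim V = dim E₁ + dim E₂ ≥ dim K[φ₁] + dim K[φ₂]`, so restriction is an isomorphism.
Combined with `V ≃ E₁ × E₂`, which every element of `K[φ]` respects, it turns the bracket
`(0, a y - b x)` into the pair of brackets computed in `E₁` and `E₂`.
-/

open Polynomial Module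

theorem finrank_adjoin_singleton_eq_natDegree_minpoly {K A : Type*} [Field K] [Ring A]
    [Algebra K A] (x : A) :
    finrank K (Algebra.adjoin K {x}) = (minpoly K x).natDegree := by
  rw [← finrank_quotient_span_eq_natDegree, Algebra.adjoin_singleton_eq_range_aeval]
  have hker : RingHom.ker (aeval (R := K) x) = Ideal.span {minpoly K x} :=
    minpoly.ker_aeval_eq_span_minpoly K x
  have e₁ := Ideal.quotientEquivAlgOfEq K hker
  have e₂ := Ideal.quotientKerEquivRange (aeval (R := K) x)
  exact (e₁.symm.trans e₂).toLinearEquiv.finrank_eq.symm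

theorem Submodule.prodEquivOfIsCompl_symm_apply_of_mapsTo {R V : Type*} [Ring R]
    [AddCommGroup V] [Module R V] {p q : Submodule R V} (hpq : IsCompl p q)
    {f : Module.End R V} (hp : ∀ x ∈ p, f x ∈ p) (hq : ∀ x ∈ q, f x ∈ q) (x : V) :
    (p.prodEquivOfIsCompl q hpq).symm (f x) =
      (f.restrict hp).prodMap (f.restrict hq) ((p.prodEquivOfIsCompl q hpq).symm x) := by
  rw [LinearEquiv.symm_apply_eq, coe_prodEquivOfIsCompl']
  conv_lhs => rw [← (p.prodEquivOfIsCompl q hpq).apply_symm_apply x, coe_prodEquivOfIsCompl',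
    map_add]
  rfl

namespace Module.End

section CommRing

variable {R V : Type*} [CommRing R] [AddCommGroup V] [Module R V] {φ : Module.End R V}

theorem aeval_restrict_apply {E : Submodule R V} (h : ∀ x ∈ E, φ x ∈ E) (p : R[X]) (x : E) :
    (aeval (φ.restrict h) p x : V) = aeval φ p x := by
  induction p using Polynomial.induction_on' with
  | add p q hp hq => simp [hp, hq]
  | monomial n a =>
    simp only [aeval_monomial, Module.End.mul_apply, Module.algebraMap_end_apply,
      SetLike.val_smul]
    rw [pow_restrict, LinearMap.coe_restrict_apply]

theorem mapsTo_of_mem_adjoin {E : Submodule R V} (h : ∀ x ∈ E, φ x ∈ E) {a : Module.End R V}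
    (ha : a ∈ Algebra.adjoin R {φ}) : ∀ x ∈ E, a x ∈ E := by
  rw [Algebra.adjoin_singleton_eq_range_aeval, AlgHom.mem_range] at ha
  obtain ⟨p, rfl⟩ := ha
  intro x hx
  rw [← aeval_restrict_apply h p ⟨x, hx⟩]
  exact Submodule.coe_mem _

theorem restrict_mem_adjoin {E : Submodule R V} (h : ∀ x ∈ E, φ x ∈ E) {a : Module.End R V}
    (ha : a ∈ Algebra.adjoin R {φ}) :
    a.restrict (mapsTo_of_mem_adjoin h ha) ∈ Algebra.adjoin R {φ.restrict h} := by
  rw [Algebra.adjoin_singleton_eq_range_aeval, AlgHom.mem_range] at ha ⊢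
  obtain ⟨p, rfl⟩ := ha
  exact ⟨p, LinearMap.ext fun x ↦ Subtype.ext (aeval_restrict_apply h p x)⟩

def adjoinRestrict {E : Submodule R V} (h : ∀ x ∈ E, φ x ∈ E) :
    Algebra.adjoin R {φ} →ₗ[R] Algebra.adjoin R {φ.restrict h} where
  toFun a := ⟨a.1.restrict (mapsTo_of_mem_adjoin h a.2), restrict_mem_adjoin h a.2⟩
  map_add' _ _ := rfl
  map_smul' _ _ := rfl

variable {E₁ E₂ : Submodule R V}

theorem adjoinRestrict_prod_injective (hc : IsCompl E₁ E₂) (h₁ : ∀ x ∈ E₁, φ x ∈ E₁)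
    (h₂ : ∀ x ∈ E₂, φ x ∈ E₂) :
    Function.Injective ((adjoinRestrict h₁).prod (adjoinRestrict h₂)) := by
  refine (injective_iff_map_eq_zero _).2 fun a ha ↦ Subtype.ext ?_
  have hker {E : Submodule R V} (h : ∀ x ∈ E, φ x ∈ E) (ha : adjoinRestrict h a = 0) :
      E ≤ LinearMap.ker a.1 := fun x hx ↦
    congrArg Subtype.val (LinearMap.congr_fun (congrArg Subtype.val ha) ⟨x, hx⟩)
  rw [Prod.ext_iff] at ha
  exact LinearMap.ker_eq_top.1 <| top_le_iff.1 <|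
    hc.sup_eq_top ▸ sup_le (hker h₁ ha.1) (hker h₂ ha.2)

end CommRing

section Field

variable {K V : Type*} [Field K] [AddCommGroup V] [Module K V] [FiniteDimensional K V]

theorem finrank_adjoin_le (f : Module.End K V) :
    finrank K (Algebra.adjoin K {f}) ≤ finrank K V := by
  rw [finrank_adjoin_singleton_eq_natDegree_minpoly, ← f.charpoly_natDegree]
  exact natDegree_le_of_dvd f.minpoly_dvd_charpoly f.charpoly_monic.ne_zero

theorem finrank_adjoin_of_charpoly_eq_minpoly {f : Module.End K V}
    (hf : f.charpoly = minpoly K f) : finrank K (Algebra.adjoin K {f}) = finrank K V := by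
  rw [finrank_adjoin_singleton_eq_natDegree_minpoly, ← hf, f.charpoly_natDegree]

theorem finrank_prod_adjoin_le {W : Type*} [AddCommGroup W] [Module K W] [FiniteDimensional K W]
    (f : Module.End K V) (g : Module.End K W) :
    finrank K (Algebra.adjoin K {f} × Algebra.adjoin K {g}) ≤ finrank K V + finrank K W := by
  rw [finrank_prod]
  exact add_le_add (finrank_adjoin_le f) (finrank_adjoin_le g)

variable {φ : Module.End K V} {E₁ E₂ : Submodule K V}

theorem finrank_adjoin_eq_finrank_prod_adjoin_restrict (hc : IsCompl E₁ E₂)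
    (hφ : φ.charpoly = minpoly K φ) (h₁ : ∀ x ∈ E₁, φ x ∈ E₁) (h₂ : ∀ x ∈ E₂, φ x ∈ E₂) :
    finrank K (Algebra.adjoin K {φ}) =
      finrank K (Algebra.adjoin K {φ.restrict h₁} × Algebra.adjoin K {φ.restrict h₂}) := by
  refine le_antisymm
    (LinearMap.finrank_le_finrank_of_injective (adjoinRestrict_prod_injective hc h₁ h₂)) ?_
  rw [finrank_adjoin_of_charpoly_eq_minpoly hφ, ← Submodule.finrank_add_eq_of_isCompl hc]
  exact finrank_prod_adjoin_le _ _

theorem adjoinRestrict_prod_bijective (hc : IsCompl E₁ E₂) (hφ : φ.charpoly = minpoly K φ)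
    (h₁ : ∀ x ∈ E₁, φ x ∈ E₁) (h₂ : ∀ x ∈ E₂, φ x ∈ E₂) :
    Function.Bijective ((adjoinRestrict h₁).prod (adjoinRestrict h₂)) := by
  have hinj := adjoinRestrict_prod_injective hc h₁ h₂
  have hd := finrank_adjoin_eq_finrank_prod_adjoin_restrict hc hφ h₁ h₂
  -- naming the spaces lets instance synthesis find their `AddCommGroup` structures
  refine ⟨hinj, (LinearMap.injective_iff_surjective_of_finrank_eq_finrank
    (V := Algebra.adjoin K {φ})
    (V₂ := Algebra.adjoin K {φ.restrict h₁} × Algebra.adjoin K {φ.restrict h₂}) hd).1 hinj⟩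

noncomputable def adjoinProdEquiv (hc : IsCompl E₁ E₂) (hφ : φ.charpoly = minpoly K φ)
    (h₁ : ∀ x ∈ E₁, φ x ∈ E₁) (h₂ : ∀ x ∈ E₂, φ x ∈ E₂) :
    (Algebra.adjoin K {φ} × V) ≃ₗ[K]
      ((Algebra.adjoin K {φ.restrict h₁} × E₁) × (Algebra.adjoin K {φ.restrict h₂} × E₂)) :=
  ((LinearEquiv.ofBijective _ (adjoinRestrict_prod_bijective hc hφ h₁ h₂)).prodCongr
    (E₁.prodEquivOfIsCompl E₂ hc).symm).trans (LinearEquiv.prodProdProdComm K _ _ _ _)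

theorem adjoinProdEquiv_apply (hc : IsCompl E₁ E₂) (hφ : φ.charpoly = minpoly K φ)
    (h₁ : ∀ x ∈ E₁, φ x ∈ E₁) (h₂ : ∀ x ∈ E₂, φ x ∈ E₂) (a : Algebra.adjoin K {φ}) (x : V) :
    adjoinProdEquiv hc hφ h₁ h₂ (a, x) =
      ((adjoinRestrict h₁ a, ((E₁.prodEquivOfIsCompl E₂ hc).symm x).1),
        (adjoinRestrict h₂ a, ((E₁.prodEquivOfIsCompl E₂ hc).symm x).2)) :=
  rfl

theorem adjoinProdEquiv_map_bracket (hc : IsCompl E₁ E₂) (hφ : φ.charpoly = minpoly K φ)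
    (h₁ : ∀ x ∈ E₁, φ x ∈ E₁) (h₂ : ∀ x ∈ E₂, φ x ∈ E₂) (u v : Algebra.adjoin K {φ} × V) :
    adjoinProdEquiv hc hφ h₁ h₂ (0, (u.1 : Module.End K V) v.2 - (v.1 : Module.End K V) u.2) =
      ((0, ((adjoinProdEquiv hc hφ h₁ h₂ u).1.1 : Module.End K E₁)
            (adjoinProdEquiv hc hφ h₁ h₂ v).1.2 -
          ((adjoinProdEquiv hc hφ h₁ h₂ v).1.1 : Module.End K E₁)
            (adjoinProdEquiv hc hφ h₁ h₂ u).1.2),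
        (0, ((adjoinProdEquiv hc hφ h₁ h₂ u).2.1 : Module.End K E₂)
            (adjoinProdEquiv hc hφ h₁ h₂ v).2.2 -
          ((adjoinProdEquiv hc hφ h₁ h₂ v).2.1 : Module.End K E₂)
            (adjoinProdEquiv hc hφ h₁ h₂ u).2.2)) := by
  obtain ⟨a, x⟩ := u
  obtain ⟨b, y⟩ := v
  have hsplit (c : Algebra.adjoin K {φ}) :=
    Submodule.prodEquivOfIsCompl_symm_apply_of_mapsTo hc (mapsTo_of_mem_adjoin h₁ c.2)
      (mapsTo_of_mem_adjoin h₂ c.2)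
  simp only [adjoinProdEquiv_apply, map_zero, map_sub, hsplit]
  rfl

end Field

end Module.End

/-- Splitting lemma: if `V = E₁ ⊕ E₂` with both summands invariant under a nonderogatory
`φ`, then the Lie algebra `ℝ[φ] ⋉ V` is isomorphic to the direct sum of the Lie algebras
`ℝ[φ₁] ⋉ E₁` and `ℝ[φ₂] ⋉ E₂`, where `φⱼ` is the restriction of `φ` to `Eⱼ`. -/
theorem stmt11 {V : Type*} [AddCommGroup V] [Module ℝ V] [FiniteDimensional ℝ V]
    (E₁ E₂ : Submodule ℝ V) (hcompl : IsCompl E₁ E₂)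
    (φ : Module.End ℝ V) (hnd : LinearMap.charpoly φ = minpoly ℝ φ)
    (h₁ : ∀ x ∈ E₁, φ x ∈ E₁) (h₂ : ∀ x ∈ E₂, φ x ∈ E₂) :
    ∃ e : ((Algebra.adjoin ℝ {φ} : Subalgebra ℝ (Module.End ℝ V)) × V) ≃ₗ[ℝ]
        (((Algebra.adjoin ℝ {φ.restrict h₁} : Subalgebra ℝ (Module.End ℝ E₁)) × E₁) ×
          ((Algebra.adjoin ℝ {φ.restrict h₂} : Subalgebra ℝ (Module.End ℝ E₂)) × E₂)),
      ∀ u v : (Algebra.adjoin ℝ {φ} : Subalgebra ℝ (Module.End ℝ V)) × V,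
        e (0, (u.1 : Module.End ℝ V) v.2 - (v.1 : Module.End ℝ V) u.2) =
          ((0, ((e u).1.1 : Module.End ℝ E₁) (e v).1.2 -
              ((e v).1.1 : Module.End ℝ E₁) (e u).1.2),
           (0, ((e u).2.1 : Module.End ℝ E₂) (e v).2.2 -
              ((e v).2.1 : Module.End ℝ E₂) (e u).2.2)) :=
  ⟨_, Module.End.adjoinProdEquiv_map_bracket hcompl hnd h₁ h₂⟩
end

section
/- Let V be a real vector space of dimension n and φ ∈ End(V) nonderogatory with a unique real eigenvalue λ of multiplicity n. Then the Lie algebra ℝ[φ] ⋉ V is isomorphic to ℝ[M₀] ⋉ ℝⁿ, where M₀ = Σ_{i=1}^{n−1} E_{i,i+1} is the principal nilpotent matrix. -/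
/-!
Write `N = φ - λ`. Since `minpoly φ = (X - λ)ⁿ` with `n = dim V`, `N` is nilpotent of class
exactly `n`, so a vector `v` with `Nⁿ⁻¹ v ≠ 0` gives a Jordan chain `Nⁿ⁻¹ v, …, N v, v`, which
is a basis in which `N` has matrix `M₀`. Conjugation by this basis maps `ℝ[φ] = ℝ[N]` onto
`ℝ[λ + M₀] = ℝ[M₀]`, and together with the coordinate map on `V` it respects the brackets
`[(a, x), (b, y)] = (0, a y - b x)`.
-/

open Polynomial

theorem Algebra.adjoin_singleton_algebraMap_add {R A : Type*} [CommRing R] [Ring A]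
    [Algebra R A] (r : R) (x : A) :
    Algebra.adjoin R {algebraMap R A r + x} = Algebra.adjoin R {x} := by
  apply le_antisymm <;> refine Algebra.adjoin_singleton_le ?_
  · exact add_mem (Subalgebra.algebraMap_mem _ r) (Algebra.self_mem_adjoin_singleton R x)
  · simpa using sub_mem (Algebra.self_mem_adjoin_singleton R (algebraMap R A r + x))
      (Subalgebra.algebraMap_mem _ r)

theorem nilpotencyClass_sub_algebraMap_of_minpoly_eq {K A : Type*} [Field K] [Ring A]
    [Algebra K A] {x : A} {a : K} {n : ℕ} (hx : minpoly K x = (X - C a) ^ n) :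
    nilpotencyClass (x - algebraMap K A a) = n := by
  have aeval_X_sub_C_pow (m : ℕ) : aeval x ((X - C a) ^ m) = (x - algebraMap K A a) ^ m := by
    simp
  have hpow : (x - algebraMap K A a) ^ n = 0 := by
    rw [← aeval_X_sub_C_pow, ← hx, minpoly.aeval]
  refine le_antisymm (Nat.sInf_le hpow) ?_
  have hmin := minpoly.degree_le_of_ne_zero K x (pow_ne_zero _ (X_sub_C_ne_zero a))
    ((aeval_X_sub_C_pow _).trans (pow_nilpotencyClass ⟨n, hpow⟩))
  simpa [hx, degree_pow] using hmin

theorem Module.End.linearIndependent_pow_apply {K V : Type*} [DivisionRing K] [AddCommGroup V]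
    [Module K V] {N : Module.End K V} {k : ℕ} {v : V} (hk : (N ^ k) v ≠ 0)
    (hk1 : (N ^ (k + 1)) v = 0) :
    LinearIndependent K fun i : Fin (k + 1) => (N ^ (i : ℕ)) v := by
  induction k generalizing v with
  | zero => simpa [linearIndependent_unique_iff] using hk
  | succ k ih =>
    have hcons : (fun i : Fin (k + 2) => (N ^ (i : ℕ)) v) =
        Fin.cons v fun i : Fin (k + 1) => (N ^ (i : ℕ)) (N v) := by
      ext i
      refine Fin.cases ?_ (fun i => ?_) i
      · simp
      · simp [pow_succ]
    rw [hcons, linearIndependent_finCons]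
    refine ⟨ih (by rwa [← Module.End.mul_apply, ← pow_succ])
      (by rwa [← Module.End.mul_apply, ← pow_succ]), fun hv => hk ?_⟩
    have hker : Submodule.span K (Set.range fun i : Fin (k + 1) => (N ^ (i : ℕ)) (N v)) ≤
        LinearMap.ker (N ^ (k + 1)) := by
      rw [Submodule.span_le]
      rintro _ ⟨i, rfl⟩
      rw [SetLike.mem_coe, LinearMap.mem_ker, ← Module.End.mul_apply, ← Module.End.mul_apply,
        ← pow_add, ← pow_succ, add_right_comm, add_comm _ (i : ℕ), pow_add, Module.End.mul_apply,
        hk1, map_zero]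
    exact hker hv

def Matrix.principalNilpotent (R : Type*) [Zero R] [One R] (n : ℕ) :
    Matrix (Fin n) (Fin n) R :=
  Matrix.of fun i j => if (j : ℕ) = i + 1 then 1 else 0

theorem Matrix.sum_single_succ_eq_principalNilpotent (R : Type*) [Semiring R] (n : ℕ) :
    ∑ k : Fin (n - 1), Matrix.single (⟨k, by omega⟩ : Fin n) ⟨k + 1, by omega⟩ (1 : R) =
      Matrix.principalNilpotent R n := by
  ext i j
  rw [Matrix.sum_apply]
  by_cases h : (j : ℕ) = i + 1
  · rw [Finset.sum_eq_single ⟨i, by omega⟩]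
    · simp [principalNilpotent, h, Matrix.single_apply, Fin.ext_iff]
    · intro k _ hk
      simp only [ne_eq, Fin.ext_iff] at hk
      simp only [Matrix.single_apply, Fin.ext_iff, ite_eq_right_iff, and_imp]
      omega
    · simp
  · rw [Finset.sum_eq_zero fun k _ => ?_]
    · simp [principalNilpotent, h]
    · simp [Matrix.single_apply, Fin.ext_iff]
      omega

theorem Module.End.exists_basis_toMatrix_eq_principalNilpotent {K V : Type*} [Field K]
    [AddCommGroup V] [Module K V] [FiniteDimensional K V] {N : Module.End K V} {n : ℕ}
    (hV : Module.finrank K V = n) (hN : nilpotencyClass N = n) :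
    ∃ b : Module.Basis (Fin n) K V, LinearMap.toMatrix b b N = Matrix.principalNilpotent K n := by
  cases n with
  | zero => exact ⟨Module.finBasisOfFinrankEq K V hV, Matrix.ext fun i => i.elim0⟩
  | succ k =>
    obtain ⟨hk1, hk⟩ := nilpotencyClass_eq_succ_iff.mp hN
    obtain ⟨v, hv⟩ : ∃ v, (N ^ k) v ≠ 0 := by
      by_contra! h
      exact hk (LinearMap.ext h)
    have hli := (linearIndependent_pow_apply hv (by rw [hk1]; rfl)).comp _ Fin.rev_injective
    let b := basisOfLinearIndependentOfCardEqFinrank hli (by simp [hV])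
    have hb (j : Fin (k + 1)) : b j = (N ^ (j.rev : ℕ)) v := by
      simp [b, coe_basisOfLinearIndependentOfCardEqFinrank]
    refine ⟨b, Matrix.ext fun i j => ?_⟩
    rw [LinearMap.toMatrix_apply, hb, ← Module.End.mul_apply, ← pow_succ']
    refine Fin.cases ?_ (fun j => ?_) j
    · simp [hk1, Matrix.principalNilpotent]
    · have : ((Fin.succ j).rev : ℕ) + 1 = (j.castSucc.rev : ℕ) := by
        simp only [Fin.val_rev, Fin.val_succ, Fin.val_castSucc]; omega
      rw [this, ← hb, b.repr_self, Finsupp.single_apply]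
      simp [Matrix.principalNilpotent, Fin.ext_iff, eq_comm]

theorem Module.Basis.exists_linearEquiv_prod_semidirect {R V ι : Type*} [CommRing R]
    [AddCommGroup V] [Module R V] [Fintype ι] [DecidableEq ι] (b : Module.Basis ι R V)
    {S : Subalgebra R (Module.End R V)} {T : Subalgebra R (Matrix ι ι R)}
    (hST : S.map (LinearMap.toMatrixAlgEquiv b : Module.End R V →ₐ[R] Matrix ι ι R) = T) :
    ∃ e : (S × V) ≃ₗ[R] (T × (ι → R)), ∀ u v : S × V,
      e (0, (u.1 : Module.End R V) v.2 - (v.1 : Module.End R V) u.2) =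
        (0, ((e u).1 : Matrix ι ι R).mulVec (e v).2 -
          ((e v).1 : Matrix ι ι R).mulVec (e u).2) := by
  let E : S ≃ₐ[R] T :=
    ((LinearMap.toMatrixAlgEquiv b).subalgebraMap S).trans (Subalgebra.equivOfEq _ _ hST)
  have hE (s : S) (x : V) :
      b.equivFun ((s : Module.End R V) x) = (E s : Matrix ι ι R).mulVec (b.equivFun x) :=
    (LinearMap.toMatrix_mulVec_repr b b _ x).symm
  refine ⟨E.toLinearEquiv.prodCongr b.equivFun, fun u v => ?_⟩
  simp only [LinearEquiv.prodCongr_apply, map_zero, map_sub, AlgEquiv.toLinearEquiv_apply, hE]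

/-- If a nonderogatory `φ ∈ End(V)` has a unique real eigenvalue `λ` of multiplicity `n`,
then the Lie algebra `ℝ[φ] ⋉ V` is isomorphic to `ℝ[M₀] ⋉ ℝⁿ`, where
`M₀ = Σ_{i=1}^{n-1} E_{i,i+1}` is the principal nilpotent matrix. -/
theorem stmt13 {V : Type*} [AddCommGroup V] [Module ℝ V] [FiniteDimensional ℝ V]
    {n : ℕ} (hV : Module.finrank ℝ V = n)
    (φ : Module.End ℝ V) (lam : ℝ)
    (hnd : LinearMap.charpoly φ = minpoly ℝ φ)
    (hchar : LinearMap.charpoly φ = (X - C lam) ^ n)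
    (M₀ : Matrix (Fin n) (Fin n) ℝ)
    (hM₀ : M₀ = ∑ i : Fin (n - 1),
      Matrix.single (⟨i.1, by have := i.2; omega⟩ : Fin n)
        (⟨i.1 + 1, by have := i.2; omega⟩ : Fin n) (1 : ℝ)) :
    ∃ e : ((Algebra.adjoin ℝ {φ} : Subalgebra ℝ (Module.End ℝ V)) × V) ≃ₗ[ℝ]
        ((Algebra.adjoin ℝ {M₀} : Subalgebra ℝ (Matrix (Fin n) (Fin n) ℝ)) × (Fin n → ℝ)),
      ∀ u v : (Algebra.adjoin ℝ {φ} : Subalgebra ℝ (Module.End ℝ V)) × V,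
        e (0, (u.1 : Module.End ℝ V) v.2 - (v.1 : Module.End ℝ V) u.2) =
          (0, ((e u).1 : Matrix (Fin n) (Fin n) ℝ).mulVec (e v).2 -
            ((e v).1 : Matrix (Fin n) (Fin n) ℝ).mulVec (e u).2) := by
  obtain ⟨b, hb⟩ := Module.End.exists_basis_toMatrix_eq_principalNilpotent hV
    (nilpotencyClass_sub_algebraMap_of_minpoly_eq (hnd.symm.trans hchar))
  rw [hM₀, Matrix.sum_single_succ_eq_principalNilpotent]
  refine b.exists_linearEquiv_prod_semidirect ?_
  have hφ : LinearMap.toMatrixAlgEquiv b φ =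
      algebraMap ℝ _ lam + LinearMap.toMatrixAlgEquiv b (φ - algebraMap ℝ _ lam) := by
    rw [map_sub, AlgEquiv.commutes, add_sub_cancel]
  rw [AlgHom.map_adjoin_singleton, AlgEquiv.coe_toAlgHom, hφ,
    Algebra.adjoin_singleton_algebraMap_add, ← hb]
  rfl
end

section
/- Let φ ∈ gl(2,ℝ) have two complex conjugate (nonreal) eigenvalues λ = r − is and λ̄ with s ≠ 0. Then the 4-dimensional Lie algebra ℝ[φ] ⋉ ℝ² is isomorphic to the real Lie algebra aff(ℂ) of affine motions of the complex line, i.e., the Lie algebra with basis (X₁,X₂,X₃,X₄) and nonzero brackets [X₁,X₃]=X₃, [X₁,X₄]=X₄, [X₂,X₃]=X₄, [X₂,X₄]=−X₃. -/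
/-!
By Cayley–Hamilton, `J = s⁻¹ (φ - r)` satisfies `J² = -1`, so `z ↦ Re z + Im z • J` is an
isomorphism of `ℝ`-algebras `ℂ ≃ ℝ[φ]`, and `z ↦ (Re z + Im z • J) e₀` identifies `ℂ` with `ℝ²`
(a nonzero element of `ℂ` acts invertibly, and both sides are `2`-dimensional). Under these
identifications the bracket `[(A, x), (B, y)] = (0, A y - B x)` of `ℝ[φ] ⋉ ℝ²` becomes
`[(z₁, z₂), (w₁, w₂)] = (0, z₁ w₂ - w₁ z₂)` on `ℂ × ℂ`, which in the real coordinates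
`(Re z₁, Im z₁, Re z₂, Im z₂)` is the bracket of `aff(ℂ)`.
-/

open Polynomial

theorem smul_sub_algebraMap_mul_self_eq_neg_one {K A : Type*} [Field K] [Ring A] [Algebra K A]
    {a : A} {r s : K} (hs : s ≠ 0)
    (h : (a - algebraMap K A r) ^ 2 + algebraMap K A (s ^ 2) = 0) :
    (s⁻¹ • (a - algebraMap K A r)) * (s⁻¹ • (a - algebraMap K A r)) = -1 := by
  rw [smul_mul_smul_comm, ← sq (a - _), eq_neg_of_add_eq_zero_left h,
    Algebra.algebraMap_eq_smul_one, smul_neg, smul_smul,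
    show s⁻¹ * s⁻¹ * s ^ 2 = 1 by field_simp, one_smul]

theorem Algebra.adjoin_singleton_smul_sub_algebraMap {K A : Type*} [Field K] [Ring A] [Algebra K A]
    (a : A) (r : K) {c : K} (hc : c ≠ 0) :
    Algebra.adjoin K {c • (a - algebraMap K A r)} = Algebra.adjoin K {a} := by
  have ha : a ∈ Algebra.adjoin K {a} := Algebra.self_mem_adjoin_singleton K a
  have hb := Algebra.self_mem_adjoin_singleton K (c • (a - algebraMap K A r))
  apply le_antisymm <;> rw [Algebra.adjoin_le_iff, Set.singleton_subset_iff, SetLike.mem_coe]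
  · exact Subalgebra.smul_mem _ (sub_mem ha (Subalgebra.algebraMap_mem _ r)) c
  · convert add_mem (Subalgebra.smul_mem _ hb c⁻¹) (Subalgebra.algebraMap_mem _ r) using 1
    rw [inv_smul_smul₀ hc, sub_add_cancel]

namespace Matrix

variable {n : Type*} [Fintype n] [DecidableEq n]

theorem smul_sub_algebraMap_mul_self_eq_neg_one_of_charpoly_eq {φ : Matrix n n ℝ} {r s : ℝ}
    (hs : s ≠ 0) (hchar : φ.charpoly = (X - C r) ^ 2 + C (s ^ 2)) :
    (s⁻¹ • (φ - algebraMap ℝ _ r)) * (s⁻¹ • (φ - algebraMap ℝ _ r)) = -1 := by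
  refine smul_sub_algebraMap_mul_self_eq_neg_one hs ?_
  simpa [hchar] using φ.aeval_self_charpoly

theorem mulVec_mulVec_sub_mulVec_mulVec {R S : Type*} [Ring R] [CommRing S]
    (f : R →+* Matrix n n S) (z₁ z₂ w₁ w₂ : R) (v : n → S) :
    f z₁ *ᵥ (f w₂ *ᵥ v) - f w₁ *ᵥ (f z₂ *ᵥ v) = f (z₁ * w₂ - w₁ * z₂) *ᵥ v := by
  rw [mulVec_mulVec, mulVec_mulVec, ← sub_mulVec, map_sub, map_mul, map_mul]

noncomputable def complexMulVecEquiv (f : ℂ →ₐ[ℝ] Matrix n n ℝ) (hn : Fintype.card n = 2)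
    {v : n → ℝ} (hv : v ≠ 0) : ℂ ≃ₗ[ℝ] (n → ℝ) :=
  LinearMap.linearEquivOfInjective
    { toFun := fun z => f z *ᵥ v
      map_add' := fun z w => by rw [map_add, add_mulVec]
      map_smul' := fun c z => by rw [map_smul, smul_mulVec]; rfl }
    (by
      rw [← LinearMap.ker_eq_bot, LinearMap.ker_eq_bot']
      intro z hz
      by_contra hz0
      apply hv
      simpa [mulVec_mulVec, ← map_mul, inv_mul_cancel₀ hz0] using congrArg (f z⁻¹ *ᵥ ·) hz)
    (by rw [Complex.finrank_real_complex, Module.finrank_fintype_fun_eq_card, hn])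

end Matrix

noncomputable def Complex.prodEquivFinFour : (ℂ × ℂ) ≃ₗ[ℝ] (Fin 4 → ℝ) where
  toFun p := ![p.1.re, p.1.im, p.2.re, p.2.im]
  invFun x := (⟨x 0, x 1⟩, ⟨x 2, x 3⟩)
  map_add' p q := by ext i; fin_cases i <;> rfl
  map_smul' c p := by ext i; fin_cases i <;> simp
  left_inv p := rfl
  right_inv x := by ext i; fin_cases i <;> rfl

@[simp]
theorem Complex.prodEquivFinFour_apply (p : ℂ × ℂ) :
    Complex.prodEquivFinFour p = ![p.1.re, p.1.im, p.2.re, p.2.im] := rfl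

/-- If `φ ∈ gl(2,ℝ)` has two complex conjugate (nonreal) eigenvalues `r ± is`, `s ≠ 0`
(equivalently its characteristic polynomial is `(X-r)² + s²`), then `ℝ[φ] ⋉ ℝ²` is
isomorphic as a Lie algebra to `aff(ℂ)`, with basis `(X₁,X₂,X₃,X₄)` and nonzero brackets
`[X₁,X₃]=X₃, [X₁,X₄]=X₄, [X₂,X₃]=X₄, [X₂,X₄]=-X₃`. -/
theorem stmt14 (φ : Matrix (Fin 2) (Fin 2) ℝ) (r s : ℝ) (hs : s ≠ 0)
    (hchar : φ.charpoly = (X - C r) ^ 2 + C (s ^ 2)) :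
    ∃ e : ((Algebra.adjoin ℝ {φ} : Subalgebra ℝ (Matrix (Fin 2) (Fin 2) ℝ)) ×
        (Fin 2 → ℝ)) ≃ₗ[ℝ] (Fin 4 → ℝ),
      ∀ u v : (Algebra.adjoin ℝ {φ} : Subalgebra ℝ (Matrix (Fin 2) (Fin 2) ℝ)) × (Fin 2 → ℝ),
        e (0, (u.1 : Matrix (Fin 2) (Fin 2) ℝ).mulVec v.2 -
            (v.1 : Matrix (Fin 2) (Fin 2) ℝ).mulVec u.2) =
          ![0, 0,
            e u 0 * e v 2 - e u 2 * e v 0 - (e u 1 * e v 3 - e u 3 * e v 1),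
            e u 0 * e v 3 - e u 3 * e v 0 + (e u 1 * e v 2 - e u 2 * e v 1)] := by
  let ψ := Complex.liftAux _
    (Matrix.smul_sub_algebraMap_mul_self_eq_neg_one_of_charpoly_eq hs hchar)
  have hψ : Function.Injective ψ := ψ.toRingHom.injective
  have hrange : ψ.range = Algebra.adjoin ℝ {φ} := by
    rw [Complex.range_liftAux, Algebra.adjoin_singleton_smul_sub_algebraMap _ _ (inv_ne_zero hs)]
  let g := (AlgEquiv.ofInjective ψ hψ).trans (Subalgebra.equivOfEq _ _ hrange)
  let E := g.toLinearEquiv.prodCongr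
    (Matrix.complexMulVecEquiv ψ (Fintype.card_fin 2) (v := Pi.single 0 1) (by simp))
  refine ⟨E.symm.trans Complex.prodEquivFinFour, fun u v => ?_⟩
  obtain ⟨⟨z₁, z₂⟩, rfl⟩ := E.surjective u
  obtain ⟨⟨w₁, w₂⟩, rfl⟩ := E.surjective v
  have hbracket : ((0 : Algebra.adjoin ℝ {φ}),
      ((E (z₁, z₂)).1 : Matrix (Fin 2) (Fin 2) ℝ).mulVec (E (w₁, w₂)).2 -
        ((E (w₁, w₂)).1 : Matrix (Fin 2) (Fin 2) ℝ).mulVec (E (z₁, z₂)).2) =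
      E (0, z₁ * w₂ - w₁ * z₂) := by
    ext : 1
    · simp [E]
    · exact Matrix.mulVec_mulVec_sub_mulVec_mulVec ψ.toRingHom _ _ _ _ _
  rw [hbracket]
  simp only [LinearEquiv.trans_apply, LinearEquiv.symm_apply_apply,
    Complex.prodEquivFinFour_apply]
  ext i
  fin_cases i <;> simp <;> ring
end

section
/- For n even, let M_s = −Σ_{j=0}^{n/2−1}(E_{2j+1,2j+2} − E_{2j+2,2j+1}) and M_n = Σ_{j=1}^{n−2} E_{j,j+2} be n×n real matrices, and M_{0,1} = M_s + M_n. Then M_s M_n = M_n M_s, M_s² = −Id, M_n^{n/2} = 0, and the characteristic polynomial of M_{0,1} equals (X² + 1)^{n/2}, which also equals its minimal polynomial. -/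
/-!
Pair the indices as `Fin m × Fin 2`. Then `M_s = 1 ⊗ J` with `J = !![0, -1; 1, 0]` and
`M_n = N ⊗ 1` with `N` the nilpotent shift of `Fin m`, so `M_s` and `M_n` commute and `M_s² = -1`.
For such `s` and `n` one has `(s + n)² + 1 = n (2s + n)`, where `2s + n` is a unit commuting
with `n`; hence `(X² + 1)^k` annihilates `s + n` exactly when `n^k = 0`. As `X² + 1` is
irreducible over `ℝ`, the minimal polynomial of `M_{0,1}` is `(X² + 1)^m`, with `m` the
nilpotency class of `M_n`. It has degree `n`, so it is also the characteristic polynomial.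
-/

open Polynomial Matrix
open scoped Kronecker

section SqAddOne

variable {A : Type*} [Ring A] {s n : A}

theorem add_sq_add_one_eq_mul (hs : s ^ 2 = -1) (hsn : Commute s n) :
    (s + n) ^ 2 + 1 = n * (2 * s + n) := by
  rw [hsn.add_sq, hs, mul_add, ← mul_assoc, (Commute.ofNat_right n 2).eq, mul_assoc, hsn.eq]
  noncomm_ring

theorem isUnit_two_mul_add (h2 : IsUnit (2 : A)) (hs : s ^ 2 = -1) (hn : IsNilpotent n)
    (hsn : Commute s n) : IsUnit (2 * s + n) := by
  have hs_inv : s * -s = 1 := by rw [mul_neg, ← sq, hs, neg_neg]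
  have hs_unit : IsUnit s := (Units.mk s (-s) hs_inv (by rwa [neg_mul, ← mul_neg])).isUnit
  exact hn.isUnit_add_left_of_commute (h2.mul hs_unit)
    ((Commute.ofNat_right n 2).mul_right hsn.symm)

theorem aeval_sq_add_one_pow_eq_zero_iff {R : Type*} [CommRing R] [Algebra R A]
    (h2 : IsUnit (2 : A)) (hs : s ^ 2 = -1) (hn : IsNilpotent n) (hsn : Commute s n) (k : ℕ) :
    aeval (s + n) ((X ^ 2 + 1 : R[X]) ^ k) = 0 ↔ n ^ k = 0 := by
  have hcomm : Commute n (2 * s + n) :=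
    ((Commute.ofNat_right n 2).mul_right hsn.symm).add_right (Commute.refl n)
  rw [map_pow, map_add, map_pow, aeval_X, map_one, add_sq_add_one_eq_mul hs hsn, hcomm.mul_pow,
    ((isUnit_two_mul_add h2 hs hn hsn).pow k).mul_left_eq_zero]

theorem minpoly_add_eq_sq_add_one_pow {K : Type*} [Field K] [Algebra K A]
    (hirr : Irreducible (X ^ 2 + 1 : K[X])) (h2 : IsUnit (2 : A)) (hs : s ^ 2 = -1)
    (hn : IsNilpotent n) (hsn : Commute s n) :
    minpoly K (s + n) = (X ^ 2 + 1) ^ nilpotencyClass n := by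
  have hmonic : (X ^ 2 + 1 : K[X]).Monic := by
    simpa using monic_X_pow_add_C (1 : K) two_ne_zero
  have hdvd_iff (k : ℕ) : minpoly K (s + n) ∣ (X ^ 2 + 1) ^ k ↔ n ^ k = 0 := by
    rw [minpoly.dvd_iff, aeval_sq_add_one_pow_eq_zero_iff h2 hs hn hsn]
  have hint : IsIntegral K (s + n) :=
    ⟨_, hmonic.pow (nilpotencyClass n),
      by rw [← aeval_def, aeval_sq_add_one_pow_eq_zero_iff h2 hs hn hsn, pow_nilpotencyClass hn]⟩
  obtain ⟨j, hj, hassoc⟩ := (dvd_prime_pow hirr.prime _).mp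
    ((hdvd_iff _).mpr (pow_nilpotencyClass hn))
  have hmin : minpoly K (s + n) = (X ^ 2 + 1) ^ j :=
    eq_of_monic_of_associated (minpoly.monic hint) (hmonic.pow j) hassoc
  have hj' : nilpotencyClass n ≤ j := Nat.sInf_le ((hdvd_iff j).mp (hmin ▸ dvd_rfl))
  rw [hmin, le_antisymm hj hj']

end SqAddOne

theorem natDegree_X_sq_add_one {R : Type*} [CommRing R] [Nontrivial R] :
    (X ^ 2 + 1 : R[X]).natDegree = 2 := by
  compute_degree!

theorem irreducible_X_sq_add_one {K : Type*} [Field K] [LinearOrder K] [IsStrictOrderedRing K] :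
    Irreducible (X ^ 2 + 1 : K[X]) := by
  refine irreducible_of_degree_le_three_of_not_isRoot ?_ fun x hx => ?_
  · rw [natDegree_X_sq_add_one]; decide
  · simp only [IsRoot, eval_add, eval_pow, eval_X, eval_one] at hx
    nlinarith

theorem Matrix.charpoly_eq_minpoly_of_natDegree_eq {K ι : Type*} [Field K] [Fintype ι]
    [DecidableEq ι] (M : Matrix ι ι K) (h : (minpoly K M).natDegree = Fintype.card ι) :
    M.charpoly = minpoly K M :=
  eq_of_monic_of_dvd_of_natDegree_le (minpoly.monic M.isIntegral) M.charpoly_monic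
    (minpoly_dvd_charpoly M) (by rw [charpoly_natDegree_eq_dim, h])

section Shift

variable (R : Type*) [Semiring R]

def shiftMatrix (n k : ℕ) : Matrix (Fin n) (Fin n) R :=
  of fun i j => if (j : ℕ) = i + k then 1 else 0

variable {R}

@[simp]
theorem shiftMatrix_apply {n k : ℕ} (i j : Fin n) :
    shiftMatrix R n k i j = if (j : ℕ) = i + k then 1 else 0 := rfl

theorem shiftMatrix_mul_shiftMatrix (n k l : ℕ) :
    shiftMatrix R n k * shiftMatrix R n l = shiftMatrix R n (k + l) := by
  ext i j
  rw [mul_apply, shiftMatrix_apply]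
  by_cases hik : (i : ℕ) + k < n
  · rw [Finset.sum_eq_single ⟨i + k, hik⟩ (fun p _ hp => by simp [Fin.ext_iff] at hp ⊢; simp [hp])
      (by simp)]
    simp [add_assoc]
  · rw [Finset.sum_eq_zero (fun p _ => by simp; omega), if_neg (by omega)]

theorem shiftMatrix_pow (n k p : ℕ) : shiftMatrix R n k ^ p = shiftMatrix R n (k * p) := by
  induction p with
  | zero => ext i j; simp [one_apply, Fin.ext_iff, eq_comm]
  | succ p ih => rw [pow_succ, ih, shiftMatrix_mul_shiftMatrix, Nat.mul_succ]

theorem shiftMatrix_eq_zero_iff [Nontrivial R] {n k : ℕ} : shiftMatrix R n k = 0 ↔ n ≤ k := by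
  constructor
  · intro h
    by_contra! hk
    simpa using congrFun (congrFun h ⟨0, by omega⟩) ⟨k, hk⟩
  · intro h
    ext i j
    simp only [shiftMatrix_apply, Matrix.zero_apply, ite_eq_right_iff]
    intro hj
    omega

theorem nilpotencyClass_shiftMatrix [Nontrivial R] {k m : ℕ} (hk : 0 < k) (hm : 0 < m) :
    nilpotencyClass (shiftMatrix R (k * m) k) = m := by
  obtain ⟨m, rfl⟩ := Nat.exists_eq_add_one_of_ne_zero hm.ne'
  rw [nilpotencyClass_eq_succ_iff, shiftMatrix_pow, shiftMatrix_pow, shiftMatrix_eq_zero_iff,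
    Ne, shiftMatrix_eq_zero_iff]
  constructor <;> nlinarith

theorem sum_single_eq_shiftMatrix (n k : ℕ) :
    ∑ j : Fin (n - k), single (⟨j.1, by have := j.2; omega⟩ : Fin n)
      (⟨j.1 + k, by have := j.2; omega⟩ : Fin n) (1 : R) = shiftMatrix R n k := by
  ext i j
  rw [Matrix.sum_apply, shiftMatrix_apply]
  simp only [single_apply, Fin.ext_iff]
  by_cases hij : (j : ℕ) = i + k
  · rw [Finset.sum_eq_single ⟨i, by omega⟩ (fun p _ hp => by simp [Fin.ext_iff] at hp ⊢; omega)
      (by simp)]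
    simp [hij]
  · rw [Finset.sum_eq_zero (fun p _ => by simp; omega), if_neg hij]

end Shift

section Reindex

variable {R ι ι' : Type*} [CommRing R] [Fintype ι] [DecidableEq ι] [Fintype ι'] [DecidableEq ι']

theorem commute_one_kronecker_kronecker_one (A : Matrix ι' ι' R) (B : Matrix ι ι R) :
    Commute (1 ⊗ₖ A) (B ⊗ₖ 1) := by
  simp [Commute, SemiconjBy, ← mul_kronecker_mul]

theorem one_kronecker_rotation_sq :
    (1 ⊗ₖ !![0, -1; 1, 0] : Matrix (ι × Fin 2) (ι × Fin 2) R) ^ 2 = -1 := by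
  rw [sq, ← mul_kronecker_mul, one_mul]
  ext ⟨a, r⟩ ⟨b, s⟩
  fin_cases r <;> fin_cases s <;> simp [one_apply]

theorem single_equiv_eq_reindexAlgEquiv (e : ι ≃ ι') (x y : ι) (c : R) :
    single (e x) (e y) c = reindexAlgEquiv R R e (single x y c) := by
  simp [coe_reindexAlgEquiv]

end Reindex

section Pairs

def pairEquiv (m : ℕ) : Fin m × Fin 2 ≃ Fin (2 * m) :=
  finProdFinEquiv.trans (finCongr (Nat.mul_comm m 2))

@[simp]
theorem pairEquiv_apply_val {m : ℕ} (x : Fin m × Fin 2) : (pairEquiv m x : ℕ) = x.2 + 2 * x.1 :=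
  rfl

variable {R : Type*} [CommRing R] {m : ℕ}

theorem shiftMatrix_two_eq_reindex_kronecker :
    shiftMatrix R (2 * m) 2 = reindexAlgEquiv R R (pairEquiv m) (shiftMatrix R m 1 ⊗ₖ 1) := by
  ext i j
  obtain ⟨⟨a, r⟩, rfl⟩ := (pairEquiv m).surjective i
  obtain ⟨⟨b, s⟩, rfl⟩ := (pairEquiv m).surjective j
  simp only [coe_reindexAlgEquiv, reindex_apply, submatrix_apply, Equiv.symm_apply_apply,
    kronecker_apply, shiftMatrix_apply, one_apply, Fin.ext_iff, pairEquiv_apply_val]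
  rw [ite_zero_mul_ite_zero, mul_one]
  exact if_congr (by omega) rfl rfl

theorem neg_sum_single_sub_single_eq_reindex_kronecker :
    -∑ j : Fin m,
      (single (⟨2 * j.1, by have := j.2; omega⟩ : Fin (2 * m))
          (⟨2 * j.1 + 1, by have := j.2; omega⟩ : Fin (2 * m)) (1 : R) -
        single (⟨2 * j.1 + 1, by have := j.2; omega⟩ : Fin (2 * m))
          (⟨2 * j.1, by have := j.2; omega⟩ : Fin (2 * m)) (1 : R)) =
      reindexAlgEquiv R R (pairEquiv m) (1 ⊗ₖ !![0, -1; 1, 0]) := by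
  have h0 (j : Fin m) : (⟨2 * j.1, by have := j.2; omega⟩ : Fin (2 * m)) = pairEquiv m (j, 0) :=
    Fin.ext (by simp)
  have h1 (j : Fin m) : (⟨2 * j.1 + 1, by have := j.2; omega⟩ : Fin (2 * m)) = pairEquiv m (j, 1) :=
    Fin.ext (by simp; ring)
  simp only [h0, h1, single_equiv_eq_reindexAlgEquiv, ← map_sub, ← map_sum, ← map_neg]
  congr 1
  ext ⟨a, r⟩ ⟨b, s⟩
  rw [Matrix.neg_apply, Matrix.sum_apply, Fintype.sum_eq_single a (fun j hj => by simp [hj])]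
  rcases eq_or_ne a b with rfl | hab
  · fin_cases r <;> fin_cases s <;> simp
  · simp [hab]

end Pairs

/-- For `n = 2m` even, with `M_s = -Σ_{j=0}^{m-1}(E_{2j+1,2j+2} - E_{2j+2,2j+1})`
(1-indexed) and `M_n = Σ_{j=1}^{n-2} E_{j,j+2}`, and `M_{0,1} = M_s + M_n`:
`M_s M_n = M_n M_s`, `M_s² = -Id`, `M_n^{m} = 0`, and both the characteristic and the
minimal polynomial of `M_{0,1}` equal `(X² + 1)^{m}`. -/
theorem stmt15 {n m : ℕ} (hm : 0 < m) (hn : n = 2 * m)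
    (Ms Mn M01 : Matrix (Fin n) (Fin n) ℝ)
    (hMs : Ms = -∑ j : Fin m,
      (Matrix.single (⟨2 * j.1, by have := j.2; omega⟩ : Fin n)
          (⟨2 * j.1 + 1, by have := j.2; omega⟩ : Fin n) (1 : ℝ) -
        Matrix.single (⟨2 * j.1 + 1, by have := j.2; omega⟩ : Fin n)
          (⟨2 * j.1, by have := j.2; omega⟩ : Fin n) (1 : ℝ)))
    (hMn : Mn = ∑ j : Fin (n - 2),
      Matrix.single (⟨j.1, by have := j.2; omega⟩ : Fin n)
        (⟨j.1 + 2, by have := j.2; omega⟩ : Fin n) (1 : ℝ))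
    (hM01 : M01 = Ms + Mn) :
    Ms * Mn = Mn * Ms ∧
    Ms ^ 2 = -1 ∧
    Mn ^ m = 0 ∧
    M01.charpoly = (X ^ 2 + 1) ^ m ∧
    minpoly ℝ M01 = (X ^ 2 + 1) ^ m := by
  subst hn
  have hMs_eq : Ms = reindexAlgEquiv ℝ ℝ (pairEquiv m) (1 ⊗ₖ !![0, -1; 1, 0]) :=
    hMs.trans neg_sum_single_sub_single_eq_reindex_kronecker
  have hMn_eq : Mn = shiftMatrix ℝ (2 * m) 2 := hMn.trans (sum_single_eq_shiftMatrix _ _)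
  have hcomm : Commute Ms Mn := by
    rw [hMs_eq, hMn_eq, shiftMatrix_two_eq_reindex_kronecker]
    exact (commute_one_kronecker_kronecker_one _ _).map _
  have hsq : Ms ^ 2 = -1 := by rw [hMs_eq, ← map_pow, one_kronecker_rotation_sq, map_neg, map_one]
  have hclass : nilpotencyClass Mn = m := hMn_eq ▸ nilpotencyClass_shiftMatrix two_pos hm
  have hnil : Mn ^ m = 0 := by rw [hMn_eq, shiftMatrix_pow, shiftMatrix_eq_zero_iff]
  have h2 : IsUnit (2 : Matrix (Fin (2 * m)) (Fin (2 * m)) ℝ) :=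
    map_ofNat (algebraMap ℝ (Matrix (Fin (2 * m)) (Fin (2 * m)) ℝ)) 2 ▸
      (IsUnit.mk0 (2 : ℝ) two_ne_zero).map _
  have hmin : minpoly ℝ M01 = (X ^ 2 + 1) ^ m := by
    rw [hM01, minpoly_add_eq_sq_add_one_pow irreducible_X_sq_add_one h2 hsq ⟨m, hnil⟩ hcomm,
      hclass]
  have hdeg : (minpoly ℝ M01).natDegree = Fintype.card (Fin (2 * m)) := by
    rw [hmin, natDegree_pow, natDegree_X_sq_add_one, Fintype.card_fin, mul_comm]
  exact ⟨hcomm.eq, hsq, hnil, hmin ▸ charpoly_eq_minpoly_of_natDegree_eq M01 hdeg, hmin⟩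
end

section
/- Let V be a real vector space of dimension n, φ ∈ gl(V) nonderogatory, and let N = {h ∈ gl(V) : [h, ℝ[φ]] ⊆ ℝ[φ]} be the normalizer of ℝ[φ] in gl(V). Then a linear map D on G_φ = ℝ[φ] ⋉ V is a derivation of G_φ if and only if there exist h ∈ N and x_D ∈ V such that D(a + x) = [h,a] + a(x_D) + h(x) for all a ∈ ℝ[φ] and x ∈ V. Consequently the Lie algebra of derivations of G_φ is isomorphic to the semidirect sum N ⋉ V. -/
set_option synthInstance.maxHeartbeats 1000000
set_option maxHeartbeats 1000000

/-- The normalizer `N = {h ∈ gl(V) : [h, ℝ[φ]] ⊆ ℝ[φ]}` of `ℝ[φ]` in `gl(V)`. -/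
def normalizerN {V : Type*} [AddCommGroup V] [Module ℝ V]
    (φ : Module.End ℝ V) : Submodule ℝ (Module.End ℝ V) where
  carrier := {h | ∀ a ∈ Algebra.adjoin ℝ {φ}, h * a - a * h ∈ Algebra.adjoin ℝ {φ}}
  add_mem' := by
    intro h h' hh hh' a ha
    have key : (h + h') * a - a * (h + h') = (h * a - a * h) + (h' * a - a * h') := by
      noncomm_ring
    rw [key]
    exact add_mem (hh a ha) (hh' a ha)
  zero_mem' := by
    intro a ha
    simpa using (Subalgebra.zero_mem (Algebra.adjoin ℝ {φ}))
  smul_mem' := by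
    intro c h hh a ha
    have key : (c • h) * a - a * (c • h) = c • (h * a - a * h) := by
      rw [smul_mul_assoc, mul_smul_comm, smul_sub]
    rw [key]
    exact Subalgebra.smul_mem _ (hh a ha) c

/-- The normalizer is closed under commutators. -/
lemma normalizerN_comm_mem {V : Type*} [AddCommGroup V] [Module ℝ V]
    (φ : Module.End ℝ V) {h₁ h₂ : Module.End ℝ V}
    (m₁ : h₁ ∈ normalizerN φ) (m₂ : h₂ ∈ normalizerN φ) :
    h₁ * h₂ - h₂ * h₁ ∈ normalizerN φ := by
  intro a ha
  have hc₂ : h₂ * a - a * h₂ ∈ Algebra.adjoin ℝ {φ} := m₂ a ha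
  have hc₁ : h₁ * a - a * h₁ ∈ Algebra.adjoin ℝ {φ} := m₁ a ha
  have key : (h₁ * h₂ - h₂ * h₁) * a - a * (h₁ * h₂ - h₂ * h₁) =
      (h₁ * (h₂ * a - a * h₂) - (h₂ * a - a * h₂) * h₁) -
        (h₂ * (h₁ * a - a * h₁) - (h₁ * a - a * h₁) * h₂) := by
    noncomm_ring
  rw [key]
  exact sub_mem (m₁ _ hc₂) (m₂ _ hc₁)

section Aux

variable {V : Type*} [AddCommGroup V] [Module ℝ V]

lemma adjoin_mul_comm (φ : Module.End ℝ V)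
    (a b : (Algebra.adjoin ℝ {φ} : Subalgebra ℝ (Module.End ℝ V))) :
    (a : Module.End ℝ V) * b = (b : Module.End ℝ V) * a := by
  have h1 : Commute (a : Module.End ℝ V) φ :=
    (Algebra.commute_of_mem_adjoin_self a.2).symm
  exact Algebra.commute_of_mem_adjoin_singleton_of_commute b.2 h1

/-- The endomorphism of `G_φ` attached to `(h, x) ∈ N × V`. -/
def PhiEnd (φ : Module.End ℝ V) (h : ↥(normalizerN φ)) (x : V) :
    Module.End ℝ ((Algebra.adjoin ℝ {φ} : Subalgebra ℝ (Module.End ℝ V)) × V) where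
  toFun q :=
    (⟨(h : Module.End ℝ V) * (q.1 : Module.End ℝ V) -
        (q.1 : Module.End ℝ V) * (h : Module.End ℝ V), h.2 _ q.1.2⟩,
      (q.1 : Module.End ℝ V) x + (h : Module.End ℝ V) q.2)
  map_add' := by
    intro q r
    simp only [Prod.mk_add_mk, Prod.fst_add, Prod.snd_add]
    refine Prod.ext (Subtype.ext ?_) ?_
    · push_cast
      noncomm_ring
    · push_cast
      simp only [LinearMap.add_apply, map_add]
      abel
  map_smul' := by
    intro c q
    simp only [Prod.smul_mk, Prod.smul_fst, Prod.smul_snd, RingHom.id_apply]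
    refine Prod.ext (Subtype.ext ?_) ?_
    · push_cast
      rw [mul_smul_comm, smul_mul_assoc, ← smul_sub]
    · push_cast
      simp only [LinearMap.smul_apply, map_smul, smul_add]

lemma PhiEnd_apply (φ : Module.End ℝ V) (h : ↥(normalizerN φ)) (x : V)
    (q : (Algebra.adjoin ℝ {φ} : Subalgebra ℝ (Module.End ℝ V)) × V) :
    PhiEnd φ h x q =
      (⟨(h : Module.End ℝ V) * (q.1 : Module.End ℝ V) -
          (q.1 : Module.End ℝ V) * (h : Module.End ℝ V), h.2 _ q.1.2⟩,
        (q.1 : Module.End ℝ V) x + (h : Module.End ℝ V) q.2) := rfl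

/-- The map Φ : N ⋉ V → End(G_φ). -/
def PhiMap (φ : Module.End ℝ V) :
    (↥(normalizerN φ) × V) →ₗ[ℝ]
      Module.End ℝ ((Algebra.adjoin ℝ {φ} : Subalgebra ℝ (Module.End ℝ V)) × V) where
  toFun p := PhiEnd φ p.1 p.2
  map_add' := by
    intro p r
    apply LinearMap.ext
    intro q
    simp only [PhiEnd_apply, LinearMap.add_apply, Prod.mk_add_mk, Prod.fst_add, Prod.snd_add]
    refine Prod.ext (Subtype.ext ?_) ?_
    · push_cast
      noncomm_ring
    · push_cast
      simp only [LinearMap.add_apply, map_add]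
      abel
  map_smul' := by
    intro c p
    apply LinearMap.ext
    intro q
    simp only [PhiEnd_apply, RingHom.id_apply, LinearMap.smul_apply, Prod.smul_mk, Prod.smul_fst, Prod.smul_snd]
    refine Prod.ext (Subtype.ext ?_) ?_
    · push_cast
      rw [smul_mul_assoc, mul_smul_comm, ← smul_sub]
    · push_cast
      simp only [LinearMap.smul_apply, map_smul, smul_add]

/-- Sufficiency: maps of the given form are derivations. -/
lemma phi_form_is_deriv (φ : Module.End ℝ V)
    (D : Module.End ℝ ((Algebra.adjoin ℝ {φ} : Subalgebra ℝ (Module.End ℝ V)) × V))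
    (h : Module.End ℝ V) (xD : V)
    (hf : ∀ (a : (Algebra.adjoin ℝ {φ} : Subalgebra ℝ (Module.End ℝ V))) (x : V),
        ((D (a, x)).1 : Module.End ℝ V) =
          h * (a : Module.End ℝ V) - (a : Module.End ℝ V) * h ∧
        (D (a, x)).2 = (a : Module.End ℝ V) xD + h x) :
    ∀ u v : (Algebra.adjoin ℝ {φ} : Subalgebra ℝ (Module.End ℝ V)) × V,
      D (0, (u.1 : Module.End ℝ V) v.2 - (v.1 : Module.End ℝ V) u.2) =
        (0, ((D u).1 : Module.End ℝ V) v.2 - (v.1 : Module.End ℝ V) (D u).2 +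
          ((u.1 : Module.End ℝ V) (D v).2 - ((D v).1 : Module.End ℝ V) u.2)) := by
  intro u v
  obtain ⟨a, x⟩ := u
  obtain ⟨b, y⟩ := v
  obtain ⟨h1, h2⟩ := hf a x
  obtain ⟨h3, h4⟩ := hf b y
  obtain ⟨h5, h6⟩ := hf 0 ((a : Module.End ℝ V) y - (b : Module.End ℝ V) x)
  refine Prod.ext (Subtype.ext ?_) ?_
  · rw [h5]
    push_cast
    simp
  · show (D (0, (a : Module.End ℝ V) y - (b : Module.End ℝ V) x)).2 = _
    rw [h6]
    rw [h1, h2, h3, h4]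
    push_cast
    simp only [LinearMap.zero_apply, LinearMap.sub_apply, Module.End.mul_apply,
      map_add, map_sub, zero_add]
    have hab : (b : Module.End ℝ V) ((a : Module.End ℝ V) xD) =
        (a : Module.End ℝ V) ((b : Module.End ℝ V) xD) := by
      have hc := adjoin_mul_comm φ a b
      calc (b : Module.End ℝ V) ((a : Module.End ℝ V) xD)
          = ((b : Module.End ℝ V) * a) xD := rfl
        _ = ((a : Module.End ℝ V) * b) xD := by rw [hc]
        _ = _ := rfl
    rw [hab]
    abel

/-- Necessity: every derivation has the given form. -/
lemma deriv_form (φ : Module.End ℝ V)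
    (D : Module.End ℝ ((Algebra.adjoin ℝ {φ} : Subalgebra ℝ (Module.End ℝ V)) × V))
    (hD : ∀ u v : (Algebra.adjoin ℝ {φ} : Subalgebra ℝ (Module.End ℝ V)) × V,
      D (0, (u.1 : Module.End ℝ V) v.2 - (v.1 : Module.End ℝ V) u.2) =
        (0, ((D u).1 : Module.End ℝ V) v.2 - (v.1 : Module.End ℝ V) (D u).2 +
          ((u.1 : Module.End ℝ V) (D v).2 - ((D v).1 : Module.End ℝ V) u.2))) :
    ∃ h ∈ normalizerN φ, ∃ xD : V,
      ∀ (a : (Algebra.adjoin ℝ {φ} : Subalgebra ℝ (Module.End ℝ V))) (x : V),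
        ((D (a, x)).1 : Module.End ℝ V) =
          h * (a : Module.End ℝ V) - (a : Module.End ℝ V) * h ∧
        (D (a, x)).2 = (a : Module.End ℝ V) xD + h x := by
  classical
  let A := (Algebra.adjoin ℝ {φ} : Subalgebra ℝ (Module.End ℝ V))
  let h : Module.End ℝ V := LinearMap.snd ℝ A V ∘ₗ (D ∘ₗ LinearMap.inr ℝ A V)
  have happ : ∀ x : V, h x = (D (0, x)).2 := fun x => rfl
  -- (D (0, y)).1 = 0
  have hfirst : ∀ y : V, (D (0, y)).1 = 0 := by
    intro y
    have key := hD (1, 0) (0, y)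
    have e1 : ((1 : A) : Module.End ℝ V) y - ((0 : A) : Module.End ℝ V) 0 = y := by simp
    rw [e1] at key
    exact congrArg Prod.fst key
  -- commutator formula
  have hcomm : ∀ a : A, ((D (a, 0)).1 : Module.End ℝ V) =
      h * (a : Module.End ℝ V) - (a : Module.End ℝ V) * h := by
    intro a
    apply LinearMap.ext
    intro y
    have key := hD (a, 0) (0, y)
    have e1 : (a : Module.End ℝ V) y - ((0 : A) : Module.End ℝ V) 0 =
        (a : Module.End ℝ V) y := by simp
    rw [e1] at key
    have e2 := congrArg Prod.snd key
    simp only [Prod.snd] at e2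
    rw [← happ, ← happ] at e2
    rw [hfirst y] at e2
    simp only [ZeroMemClass.coe_zero, LinearMap.zero_apply, map_zero, sub_zero] at e2
    have e3 : (D (0, (a : Module.End ℝ V) y)).2 =
        ((D (a, 0)).1 : Module.End ℝ V) y + (a : Module.End ℝ V) (h y) := e2
    simp only [LinearMap.sub_apply, Module.End.mul_apply]
    rw [show h ((a : Module.End ℝ V) y) = (D (0, (a : Module.End ℝ V) y)).2 from rfl, e3]
    abel
  have hmem : h ∈ normalizerN φ := by
    intro a ha
    have key := hcomm ⟨a, ha⟩
    rw [← key]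
    exact (D ((⟨a, ha⟩ : A), 0)).1.2
  refine ⟨h, hmem, (D (1, 0)).2, ?_⟩
  have hsecond : ∀ a : A, (D (a, 0)).2 = (a : Module.End ℝ V) (D (1, 0)).2 := by
    intro a
    have key := hD (a, 0) (1, 0)
    have e1 : (a : Module.End ℝ V) (0 : V) - ((1 : A) : Module.End ℝ V) 0 = 0 := by simp
    rw [e1] at key
    have e2 := congrArg Prod.snd key
    simp only [Prod.snd_zero, map_zero] at e2
    simp only [OneMemClass.coe_one, Module.End.one_apply, map_zero, sub_zero] at e2
    -- e2 : (D (0,0)).2 = (D (a,0)).1 0 - (D (a,0)).2 + (a (D (1,0)).2 - (D (1,0)).1 0)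
    have e3 : (D ((0 : A), (0 : V))).2 = 0 := by
      have e4 : ((0 : A), (0 : V)) = (0 : A × V) := rfl
      rw [e4, map_zero]
      rfl
    rw [e3, zero_sub] at e2
    linear_combination (norm := abel) e2
  intro a x
  have hsplit : D (a, x) = D (a, 0) + D (0, x) := by
    rw [← map_add]
    congr 1
    simp
  constructor
  · rw [hsplit]
    have e : (D (a, 0) + D (0, x)).1 = (D (a, 0)).1 + (D (0, x)).1 := rfl
    rw [e, hfirst x, add_zero, hcomm a]
  · rw [hsplit]
    have e : (D (a, 0) + D (0, x)).2 = (D (a, 0)).2 + (D (0, x)).2 := rfl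
    rw [e, hsecond a, ← happ]

end Aux

lemma PhiMap_apply {V : Type*} [AddCommGroup V] [Module ℝ V] (φ : Module.End ℝ V)
    (p : ↥(normalizerN φ) × V) : PhiMap φ p = PhiEnd φ p.1 p.2 := rfl

/-- Derivations of `G_φ = ℝ[φ] ⋉ V` for nonderogatory `φ` are exactly the maps
`D(a + x) = [h,a] + a(x_D) + h(x)` for `h ∈ N` and `x_D ∈ V`; consequently `Der(G_φ)` is
isomorphic as a Lie algebra to the semidirect sum `N ⋉ V`. -/
theorem stmt17 {V : Type*} [AddCommGroup V] [Module ℝ V] [FiniteDimensional ℝ V]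
    (φ : Module.End ℝ V) (hnd : LinearMap.charpoly φ = minpoly ℝ φ) :
    (∀ D : Module.End ℝ ((Algebra.adjoin ℝ {φ} : Subalgebra ℝ (Module.End ℝ V)) × V),
      (∀ u v : (Algebra.adjoin ℝ {φ} : Subalgebra ℝ (Module.End ℝ V)) × V,
        D (0, (u.1 : Module.End ℝ V) v.2 - (v.1 : Module.End ℝ V) u.2) =
          (0, ((D u).1 : Module.End ℝ V) v.2 - (v.1 : Module.End ℝ V) (D u).2 +
            ((u.1 : Module.End ℝ V) (D v).2 - ((D v).1 : Module.End ℝ V) u.2))) ↔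
      (∃ h ∈ normalizerN φ, ∃ xD : V,
        ∀ (a : (Algebra.adjoin ℝ {φ} : Subalgebra ℝ (Module.End ℝ V))) (x : V),
          ((D (a, x)).1 : Module.End ℝ V) =
            h * (a : Module.End ℝ V) - (a : Module.End ℝ V) * h ∧
          (D (a, x)).2 = (a : Module.End ℝ V) xD + h x)) ∧
    (∃ Φ : (↥(normalizerN φ) × V) →ₗ[ℝ]
        Module.End ℝ ((Algebra.adjoin ℝ {φ} : Subalgebra ℝ (Module.End ℝ V)) × V),
      Function.Injective Φ ∧
      (∀ D : Module.End ℝ ((Algebra.adjoin ℝ {φ} : Subalgebra ℝ (Module.End ℝ V)) × V),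
        (∀ u v : (Algebra.adjoin ℝ {φ} : Subalgebra ℝ (Module.End ℝ V)) × V,
          D (0, (u.1 : Module.End ℝ V) v.2 - (v.1 : Module.End ℝ V) u.2) =
            (0, ((D u).1 : Module.End ℝ V) v.2 - (v.1 : Module.End ℝ V) (D u).2 +
              ((u.1 : Module.End ℝ V) (D v).2 - ((D v).1 : Module.End ℝ V) u.2))) ↔
        D ∈ Set.range Φ) ∧
      (∀ (h₁ h₂ : ↥(normalizerN φ)) (x₁ x₂ : V),
        Φ (h₁, x₁) * Φ (h₂, x₂) - Φ (h₂, x₂) * Φ (h₁, x₁) =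
          Φ (⟨(h₁ : Module.End ℝ V) * (h₂ : Module.End ℝ V) -
                (h₂ : Module.End ℝ V) * (h₁ : Module.End ℝ V),
              normalizerN_comm_mem φ h₁.2 h₂.2⟩,
            (h₁ : Module.End ℝ V) x₂ - (h₂ : Module.End ℝ V) x₁))) := by
  constructor
  · intro D
    constructor
    · exact deriv_form φ D
    · rintro ⟨h, hm, xD, hf⟩
      exact phi_form_is_deriv φ D h xD hf
  · refine ⟨PhiMap φ, ?_, ?_, ?_⟩
    · -- injectivity
      intro p q hpq
      have h2 : p.2 = q.2 := by
        have e := congrArg (fun f : Module.End ℝ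
            ((Algebra.adjoin ℝ {φ} : Subalgebra ℝ (Module.End ℝ V)) × V) =>
            (f (1, 0)).2) hpq
        simpa [PhiMap_apply, PhiEnd_apply] using e
      have h1 : p.1 = q.1 := by
        apply Subtype.ext
        apply LinearMap.ext
        intro y
        have e := congrArg (fun f : Module.End ℝ
            ((Algebra.adjoin ℝ {φ} : Subalgebra ℝ (Module.End ℝ V)) × V) =>
            (f (0, y)).2) hpq
        simpa [PhiMap_apply, PhiEnd_apply] using e
      exact Prod.ext h1 h2
    · intro D
      constructor
      · intro hD
        obtain ⟨h, hm, xD, hf⟩ := deriv_form φ D hD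
        refine ⟨(⟨h, hm⟩, xD), ?_⟩
        apply LinearMap.ext
        rintro ⟨a, x⟩
        rw [PhiMap_apply, PhiEnd_apply]
        refine Prod.ext (Subtype.ext ?_) ?_
        · exact ((hf a x).1).symm
        · exact ((hf a x).2).symm
      · rintro ⟨⟨h, xD⟩, rfl⟩
        exact phi_form_is_deriv φ _ (h : Module.End ℝ V) xD (fun a x => ⟨rfl, rfl⟩)
    · -- commutator
      intro h₁ h₂ x₁ x₂
      apply LinearMap.ext
      rintro ⟨a, y⟩
      simp only [LinearMap.sub_apply, Module.End.mul_apply, PhiMap_apply, PhiEnd_apply]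
      refine Prod.ext (Subtype.ext ?_) ?_
      · show ((⟨_, _⟩ : ↥(Algebra.adjoin ℝ {φ})) - ⟨_, _⟩ : ↥(Algebra.adjoin ℝ {φ})).1 = _
        push_cast
        noncomm_ring
      · show _ - _ = _
        simp only [Prod.fst_sub, Prod.snd_sub]
        push_cast
        simp only [LinearMap.sub_apply, Module.End.mul_apply, map_add, map_sub]
        abel
end

section
/- Let B_n = ℝ·Id ⊕ L_n ⊆ gl(n,ℝ), where L_n is the span of the matrix units E_{i,n} for i = 1,…,n−1 and n ≥ 3. Then B_n is a maximal abelian subalgebra of gl(n,ℝ) of dimension n, yet for every α ∈ (ℝⁿ)* the orbit {α∘a : a ∈ B_n} spans a subspace of dimension at most 2; in particular, the semidirect sum B_n ⋉ ℝⁿ is not a Frobenius Lie algebra. -/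
/-!
Parametrize `B_n` by `x ∈ Kⁿ ↦ Φ x` (`Matrix.scalarPlusColumn`), the matrix whose last column is `x` and whose other
columns are `x_n` times those of the identity; reading off the last column shows that `Φ` is
injective, so `dim B_n = n`. The whole argument rests on
`Φ x · y = y_n x + x_n y - x_n y_n e_n`, from which `Φ x (Φ y v) = Φ y (Φ x v)` is a
polynomial identity, and which shows that `α ∘ Φ x = x_n α + (α x - x_n α e_n) e_n^*` lies in
the span of `α` and `e_n^*`. A matrix commuting with every `E_{i,n}` (`i < n`) is already of the
form `Φ x`. Finally, for any `β` on `B_n ⋉ Kⁿ` choose `t ≠ 0` with `t_n = 0 = β(0, t)` (possible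
as `n ≥ 3`): then `Φ t · y = y_n t`, so `(Φ t, 0)` lies in the radical of `∂β`.
-/

theorem Module.Dual.exists_ne_zero_apply_eq_zero_of_two_lt_finrank {K V : Type*} [Field K]
    [AddCommGroup V] [Module K V] [FiniteDimensional K V] (h : 2 < Module.finrank K V)
    (f g : Module.Dual K V) : ∃ v ≠ 0, f v = 0 ∧ g v = 0 := by
  have hker : LinearMap.ker (f.prod g) ≠ ⊥ :=
    LinearMap.ker_ne_bot_of_finrank_lt (by rwa [Module.finrank_prod, Module.finrank_self])
  obtain ⟨v, hv, hv0⟩ := Submodule.exists_mem_ne_zero_of_ne_bot hker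
  exact ⟨v, hv0, congr_arg Prod.fst hv, congr_arg Prod.snd hv⟩

namespace Matrix

variable {K ι : Type*} [DecidableEq ι]

section CommRing

variable [CommRing K] (m : ι)

def scalarPlusColumn : (ι → K) →ₗ[K] Matrix ι ι K where
  toFun x := of fun k l => if l = m then x k else if k = l then x m else 0
  map_add' x y := by ext k l; simp only [of_apply, Pi.add_apply, add_apply]; split_ifs <;> simp
  map_smul' c x := by ext k l; simp only [of_apply, Pi.smul_apply, smul_apply]; split_ifs <;> simp

variable {m}

theorem scalarPlusColumn_apply (x : ι → K) (k l : ι) :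
    scalarPlusColumn m x k l = if l = m then x k else if k = l then x m else 0 := rfl

theorem scalarPlusColumn_single (i : ι) :
    scalarPlusColumn m (Pi.single i 1 : ι → K) = if i = m then 1 else single i m 1 := by
  ext k l
  rw [scalarPlusColumn_apply]
  split_ifs <;> simp_all [one_apply, single_apply, Pi.single_apply, eq_comm]

theorem scalarPlusColumn_injective : Function.Injective (scalarPlusColumn (K := K) m) :=
  fun x y h => funext fun k => by simpa [scalarPlusColumn_apply] using congr_fun₂ h k m

variable [Fintype ι]

theorem range_scalarPlusColumn : LinearMap.range (scalarPlusColumn (K := K) m) =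
    Submodule.span K {1} ⊔ Submodule.span K ((fun i => single i m 1) '' {m}ᶜ) := by
  apply le_antisymm
  · rintro _ ⟨x, rfl⟩
    rw [pi_eq_sum_univ' x, map_sum]
    refine Submodule.sum_mem _ fun i _ => ?_
    rw [map_smul, scalarPlusColumn_single]
    refine Submodule.smul_mem _ _ ?_
    split_ifs with hi
    · exact Submodule.mem_sup_left (Submodule.subset_span rfl)
    · exact Submodule.mem_sup_right (Submodule.subset_span ⟨i, hi, rfl⟩)
  · refine sup_le (Submodule.span_le.2 ?_) (Submodule.span_le.2 ?_)
    · rintro _ rfl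
      exact ⟨Pi.single m 1, by simp [scalarPlusColumn_single]⟩
    · rintro _ ⟨i, hi, rfl⟩
      exact ⟨Pi.single i 1, by simp [scalarPlusColumn_single, Set.mem_compl_singleton_iff.1 hi]⟩

theorem scalarPlusColumn_mulVec (x y : ι → K) :
    scalarPlusColumn m x *ᵥ y = y m • x + x m • y - (x m * y m) • Pi.single m 1 := by
  ext k
  rw [mulVec, dotProduct, Fintype.sum_eq_add_sum_compl m]
  have hoff : ∑ j ∈ {m}ᶜ, scalarPlusColumn m x k j * y j =
      ∑ j ∈ {m}ᶜ, if k = j then x m * y j else 0 :=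
    Finset.sum_congr rfl fun j hj => by
      rw [scalarPlusColumn_apply, if_neg (Finset.mem_compl.1 hj <| Finset.mem_singleton.2 ·),
        ite_mul, zero_mul]
  rw [hoff, Finset.sum_ite_eq, scalarPlusColumn_apply, if_pos rfl]
  simp only [Finset.mem_compl, Finset.mem_singleton, Pi.add_apply, Pi.sub_apply, Pi.smul_apply,
    smul_eq_mul, Pi.single_apply]
  split_ifs <;> simp_all <;> ring

theorem commute_scalarPlusColumn (x y : ι → K) :
    Commute (scalarPlusColumn m x) (scalarPlusColumn m y) := by
  refine ext_iff_mulVec.2 fun v => ?_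
  rw [← mulVec_mulVec, ← mulVec_mulVec]
  ext k
  simp only [scalarPlusColumn_mulVec, Pi.add_apply, Pi.sub_apply, Pi.smul_apply, smul_eq_mul,
    Pi.single_apply]
  split_ifs <;> ring

theorem eq_scalarPlusColumn_of_commute_single {c : Matrix ι ι K}
    (hc : ∀ i ≠ m, Commute c (single i m 1)) : c = scalarPlusColumn m (fun k => c k m) := by
  ext k l
  rw [scalarPlusColumn_apply]
  split_ifs with hl hkl
  · rw [hl]
  · have := congr_fun₂ (hc l hl).eq k m
    subst hkl
    simpa using this
  · have := congr_fun₂ (hc l hl).eq k m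
    simpa [hkl] using this

theorem mem_range_scalarPlusColumn_of_forall_commute {c : Matrix ι ι K}
    (hc : ∀ a ∈ LinearMap.range (scalarPlusColumn m), Commute c a) :
    c ∈ LinearMap.range (scalarPlusColumn m) :=
  ⟨_, (eq_scalarPlusColumn_of_commute_single fun i hi => by
    simpa [scalarPlusColumn_single, hi] using hc _ ⟨Pi.single i 1, rfl⟩).symm⟩

theorem dual_comp_mulVecLin_scalarPlusColumn (α : Module.Dual K (ι → K)) (x : ι → K) :
    α ∘ₗ mulVecLin (scalarPlusColumn m x) =
      x m • α + (α x - x m * α (Pi.single m 1)) • LinearMap.proj m := by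
  ext y
  simp only [LinearMap.comp_apply, mulVecLin_apply, scalarPlusColumn_mulVec, map_sub, map_add,
    map_smul, LinearMap.add_apply, LinearMap.smul_apply, LinearMap.proj_apply, smul_eq_mul]
  ring

end CommRing

section Field

variable [Field K] [Fintype ι] (m : ι)

theorem finrank_span_dual_comp_mulVecLin_le_two (α : Module.Dual K (ι → K)) :
    Module.finrank K (Submodule.span K
      {f | ∃ a ∈ LinearMap.range (scalarPlusColumn m), f = α ∘ₗ mulVecLin a}) ≤ 2 := by
  classical
  have hle : Submodule.span K
      {f | ∃ a ∈ LinearMap.range (scalarPlusColumn m), f = α ∘ₗ mulVecLin a} ≤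
      Submodule.span K (({α, LinearMap.proj m} : Finset (Module.Dual K (ι → K))) : Set _) := by
    rw [Submodule.span_le]
    rintro _ ⟨_, ⟨x, rfl⟩, rfl⟩
    rw [dual_comp_mulVecLin_scalarPlusColumn]
    exact add_mem (Submodule.smul_mem _ _ (Submodule.subset_span (by simp)))
      (Submodule.smul_mem _ _ (Submodule.subset_span (by simp)))
  exact (Submodule.finrank_mono hle).trans
    ((finrank_span_finset_le_card _).trans Finset.card_le_two)

-- `-β (0, u.1 *ᵥ v.2 - v.1 *ᵥ u.2)` is `∂β(u, v)` for the bracket of `B ⋉ Kⁿ`.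
theorem not_exists_frobenius_of_eq_range_scalarPlusColumn (h : 2 < Fintype.card ι)
    (B : Submodule K (Matrix ι ι K)) (hB : B = LinearMap.range (scalarPlusColumn m)) :
    ¬ ∃ β : (B × (ι → K)) →ₗ[K] K,
      ∀ u : B × (ι → K),
        (∀ v : B × (ι → K),
          -β (0, (u.1 : Matrix ι ι K) *ᵥ v.2 - (v.1 : Matrix ι ι K) *ᵥ u.2) = 0) → u = 0 := by
  rintro ⟨β, hβ⟩
  obtain ⟨t, ht0, htm, hβt⟩ := Module.Dual.exists_ne_zero_apply_eq_zero_of_two_lt_finrank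
    (by rwa [Module.finrank_fintype_fun_eq_card]) (LinearMap.proj m) (β ∘ₗ LinearMap.inr K _ _)
  have hmulVec (y : ι → K) : scalarPlusColumn m t *ᵥ y = y m • t := by
    rw [scalarPlusColumn_mulVec, ← LinearMap.proj_apply (R := K) m t, htm]
    simp
  have hu := hβ (⟨scalarPlusColumn m t, hB ▸ ⟨t, rfl⟩⟩, 0) fun v => by
    rw [mulVec_zero, sub_zero, hmulVec, ← smul_zero (v.2 m), ← Prod.smul_mk, map_smul]
    simp only [LinearMap.comp_apply, LinearMap.inr_apply] at hβt
    rw [hβt, smul_zero, neg_zero]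
  refine ht0 (scalarPlusColumn_injective (m := m) ?_)
  rw [map_zero]
  exact congr_arg (fun u => (u.1 : Matrix ι ι K)) hu

end Field

end Matrix

/-- For `n ≥ 3`, `B_n = ℝ·Id ⊕ L_n ⊆ gl(n,ℝ)` with `L_n = span(E_{i,n}, i = 1,…,n-1)` is a
maximal abelian subalgebra of dimension `n`, yet every coadjoint orbit
`{α∘a : a ∈ B_n}` spans a subspace of dimension at most `2`; in particular
`B_n ⋉ ℝⁿ` is not a Frobenius Lie algebra. -/
theorem stmt19 {n : ℕ} (hn : 3 ≤ n)
    (L B : Submodule ℝ (Matrix (Fin n) (Fin n) ℝ))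
    (hL : L = Submodule.span ℝ (Set.range fun i : Fin (n - 1) =>
      Matrix.single (⟨i.1, by have := i.2; omega⟩ : Fin n)
        (⟨n - 1, by omega⟩ : Fin n) (1 : ℝ)))
    (hB : B = Submodule.span ℝ {(1 : Matrix (Fin n) (Fin n) ℝ)} ⊔ L) :
    (∀ a ∈ B, ∀ b ∈ B, a * b = b * a) ∧
    (∀ c : Matrix (Fin n) (Fin n) ℝ, (∀ a ∈ B, c * a = a * c) → c ∈ B) ∧
    Module.finrank ℝ B = n ∧
    (∀ α : Module.Dual ℝ (Fin n → ℝ),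
      Module.finrank ℝ (Submodule.span ℝ
        {f : Module.Dual ℝ (Fin n → ℝ) | ∃ a ∈ B, f = α ∘ₗ (Matrix.mulVecLin a)}) ≤ 2) ∧
    ¬ ∃ β : (B × (Fin n → ℝ)) →ₗ[ℝ] ℝ,
      ∀ u : B × (Fin n → ℝ),
        (∀ v : B × (Fin n → ℝ),
          -β ((0 : B), (u.1 : Matrix (Fin n) (Fin n) ℝ).mulVec v.2 -
            (v.1 : Matrix (Fin n) (Fin n) ℝ).mulVec u.2) = 0) → u = 0 := by
  set m : Fin n := ⟨n - 1, by omega⟩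
  have hB_range : B = LinearMap.range (Matrix.scalarPlusColumn m) := by
    rw [hB, hL, Matrix.range_scalarPlusColumn]
    congr 2
    ext a
    constructor
    · rintro ⟨i, rfl⟩
      exact ⟨_, by simp [m, Fin.ext_iff]; omega, rfl⟩
    · rintro ⟨i, hi, rfl⟩
      exact ⟨⟨i, by simp [m, Fin.ext_iff] at hi; omega⟩, rfl⟩
  refine ⟨?_, ?_, ?_, ?_, Matrix.not_exists_frobenius_of_eq_range_scalarPlusColumn m
    (by rw [Fintype.card_fin]; omega) B hB_range⟩
  all_goals subst hB_range
  · rintro _ ⟨x, rfl⟩ _ ⟨y, rfl⟩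
    exact Matrix.commute_scalarPlusColumn x y
  · exact fun c hc => Matrix.mem_range_scalarPlusColumn_of_forall_commute hc
  · rw [LinearMap.finrank_range_of_inj Matrix.scalarPlusColumn_injective, Module.finrank_fin_fun]
  · exact Matrix.finrank_span_dual_comp_mulVecLin_le_two m
end
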